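/- arXiv:2212.02264 — 6 statements merged into one kernel-verified Lean document; each statement's English description precedes it below -/
import Mathlib

section
/- Let F = (𝒞_0,𝒞_1,…,𝒞_N) be a family of buckets with probability distribution P such that (F,P) is 1/6-representative. Then for every τ ≥ 0: Pr_{S∼D_c^m}[L^{1/3}_D(g_S) > 24·τ] ≤ 23·max_{1≤i≤N} Pr_{S∼D_c^m}[L^{5/6}_D(g_{S(𝒞_i)}) > τ]. -/
open MeasureTheory Finset
open scoped ENNReal

noncomputable section

/-- A hypothesis takes values in `{-1, 1}`. -/
def PM1 {X : Type} (h : X → ℝ) : Prop := ∀ x, h x = 1 ∨ h x = -1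

/-- The concept class `C` shatters some `k` points: every sign pattern is realized. -/
def Shatters {X : Type} (C : Set (X → ℝ)) (k : ℕ) : Prop :=
  ∃ xs : Fin k → X, ∀ σ : Fin k → Bool, ∃ h ∈ C, ∀ i, h (xs i) = (if σ i then 1 else -1)

/-- `d` is the VC dimension of `C`: the largest size of a shattered set. -/
def VCdim {X : Type} (C : Set (X → ℝ)) (d : ℕ) : Prop :=
  Shatters C d ∧ ¬ Shatters C (d + 1)

/-- An ERM rule for the target concept `c`: on any sample labeled by `c` it outputs a
member of `C` consistent with the sample. -/
def IsERM {X : Type} {n : ℕ} (C : Set (X → ℝ)) (c : X → ℝ)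
    (ERM : (Fin n → X) → (X → ℝ)) : Prop :=
  ∀ s : Fin n → X, ERM s ∈ C ∧ ∀ k, ERM s (s k) = c (s k)

/-- The bagged voting classifier `f_{S,B}`. -/
def bagF {X : Type} {m n t : ℕ} (ERM : (Fin n → X) → (X → ℝ))
    (S : Fin m → X) (B : Fin t → (Fin n → Fin m)) (x : X) : ℝ :=
  (t : ℝ)⁻¹ * ∑ i : Fin t, ERM (S ∘ B i) x

/-- Margin loss `L^γ_D(f) = Pr_{x∼D}[f(x)·c(x) ≤ γ]`, as a real number. -/
def marginLoss {X : Type} [MeasurableSpace X] (D : Measure X) (c : X → ℝ)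
    (f : X → ℝ) (γ : ℝ) : ℝ :=
  (D {x | f x * c x ≤ γ}).toReal

/-- Uniform probability measure on a finite type. -/
def unif (α : Type) [Fintype α] [MeasurableSpace α] : Measure α :=
  (Fintype.card α : ℝ≥0∞)⁻¹ • Measure.count


/-- The average voting classifier `g_S` over all `m^n` bootstrap samples. -/
def gAvg {X : Type} {m n : ℕ} (ERM : (Fin n → X) → (X → ℝ)) (S : Fin m → X) (x : X) : ℝ :=
  ((m : ℝ) ^ n)⁻¹ * ∑ I : Fin n → Fin m, ERM (S ∘ I) x

/-- The voting classifier `g_{S(𝒞)}` averaging over the bootstrap samples of a bucket. -/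
def gBucket {X : Type} {m n : ℕ} (ERM : (Fin n → X) → (X → ℝ)) (S : Fin m → X)
    (𝒞 : Finset (Fin n → Fin m)) (x : X) : ℝ :=
  ((𝒞.card : ℝ))⁻¹ * ∑ I ∈ 𝒞, ERM (S ∘ I) x

/-- `(F, P)` with `F = (𝒞_0, 𝒞_1, …, 𝒞_N)` (given as `C0` and `Cb`) and
`P = (P0, Pb)` is an `ε`-representative pair: buckets are nonempty, `P` is a probability
distribution, drawing a bucket by `P` and then a uniform element of it yields the
uniform distribution on `[m]^n`, and `P(0) ≤ ε`. -/
def Representative {m n N : ℕ} (C0 : Finset (Fin n → Fin m))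
    (Cb : Fin N → Finset (Fin n → Fin m)) (P0 : ℝ) (Pb : Fin N → ℝ) (ε : ℝ) : Prop :=
  C0.Nonempty ∧ (∀ i, (Cb i).Nonempty) ∧ 0 ≤ P0 ∧ (∀ i, 0 ≤ Pb i) ∧
  P0 + ∑ i, Pb i = 1 ∧
  (∀ I : Fin n → Fin m,
    P0 * (if I ∈ C0 then ((C0.card : ℝ))⁻¹ else 0)
      + ∑ i, Pb i * (if I ∈ Cb i then (((Cb i).card : ℝ))⁻¹ else 0)
      = ((m : ℝ) ^ n)⁻¹) ∧
  P0 ≤ ε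

open scoped Classical

private lemma markov_frac {α : Type*} [MeasurableSpace α] (μ : Measure α) [IsFiniteMeasure μ]
    {N : ℕ} (w : Fin N → ℝ) (hw : ∀ i, 0 ≤ w i) (Q : Fin N → Set α) (A : Set α)
    (a : ℝ) (ha : 0 < a)
    (hA : ∀ x ∈ A, a ≤ ∑ i ∈ Finset.univ.filter (fun i => x ∈ Q i), w i) :
    a * (μ A).toReal ≤ ∑ i, w i * (μ (Q i ∩ A)).toReal := by
  set T : Fin N → Set α := fun i => toMeasurable μ (Q i ∩ A) with hT
  have hTm : ∀ i, MeasurableSet (T i) := fun i => measurableSet_toMeasurable _ _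
  set f : α → ℝ≥0∞ := fun x => ∑ i, (T i).indicator (fun _ => ENNReal.ofReal (w i)) x with hf
  have hfm : Measurable f := by
    apply Finset.measurable_sum
    intro i _
    exact measurable_const.indicator (hTm i)
  have hsub : A ⊆ {x | ENNReal.ofReal a ≤ f x} := by
    intro x hx
    have h1 : ENNReal.ofReal a
        ≤ ENNReal.ofReal (∑ i ∈ Finset.univ.filter (fun i => x ∈ Q i), w i) :=
      ENNReal.ofReal_le_ofReal (hA x hx)
    have h2 : ENNReal.ofReal (∑ i ∈ Finset.univ.filter (fun i => x ∈ Q i), w i)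
        = ∑ i ∈ Finset.univ.filter (fun i => x ∈ Q i), ENNReal.ofReal (w i) :=
      ENNReal.ofReal_sum_of_nonneg (fun i _ => hw i)
    have h3 : ∑ i ∈ Finset.univ.filter (fun i => x ∈ Q i), ENNReal.ofReal (w i) ≤ f x := by
      calc ∑ i ∈ Finset.univ.filter (fun i => x ∈ Q i), ENNReal.ofReal (w i)
          = ∑ i ∈ Finset.univ.filter (fun i => x ∈ Q i),
              (T i).indicator (fun _ => ENNReal.ofReal (w i)) x := by
            refine Finset.sum_congr rfl fun i hi => ?_
            have hxT : x ∈ T i :=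
              subset_toMeasurable μ _ (Set.mem_inter (Finset.mem_filter.mp hi).2 hx)
            rw [Set.indicator_of_mem hxT]
        _ ≤ ∑ i, (T i).indicator (fun _ => ENNReal.ofReal (w i)) x :=
            Finset.sum_le_sum_of_subset (Finset.filter_subset _ _)
        _ = f x := rfl
    exact le_trans (h1.trans_eq h2) h3
  have hmark := mul_meas_ge_le_lintegral₀ (μ := μ) hfm.aemeasurable (ENNReal.ofReal a)
  have hlint : ∫⁻ x, f x ∂μ = ∑ i, ENNReal.ofReal (w i) * μ (Q i ∩ A) := by
    rw [hf, lintegral_finset_sum _ (fun i _ => measurable_const.indicator (hTm i))]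
    refine Finset.sum_congr rfl fun i _ => ?_
    rw [lintegral_indicator (hTm i), setLIntegral_const, measure_toMeasurable]
  have hkey : ENNReal.ofReal a * μ A ≤ ∑ i, ENNReal.ofReal (w i) * μ (Q i ∩ A) := by
    calc ENNReal.ofReal a * μ A ≤ ENNReal.ofReal a * μ {x | ENNReal.ofReal a ≤ f x} :=
          mul_le_mul_right (measure_mono hsub) _
      _ ≤ ∫⁻ x, f x ∂μ := hmark
      _ = _ := hlint
  have hfin : (∑ i, ENNReal.ofReal (w i) * μ (Q i ∩ A)) ≠ ∞ := by
    refine (ENNReal.sum_lt_top.mpr fun i _ => ?_).ne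
    exact ENNReal.mul_lt_top ENNReal.ofReal_lt_top (measure_lt_top μ _)
  have := ENNReal.toReal_le_toReal (ne_top_of_le_ne_top hfin hkey) hfin |>.mpr hkey
  rw [ENNReal.toReal_mul, ENNReal.toReal_ofReal ha.le] at this
  rw [ENNReal.toReal_sum (fun i _ => ENNReal.mul_ne_top ENNReal.ofReal_ne_top (measure_ne_top μ _))] at this
  simpa [ENNReal.toReal_mul, ENNReal.toReal_ofReal (hw _)] using this

private lemma gBucket_abs_le {X : Type} {m n : ℕ} {C : Set (X → ℝ)} (hpm : ∀ h ∈ C, PM1 h)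
    {c : X → ℝ} {ERM : (Fin n → X) → (X → ℝ)} (hERM : IsERM C c ERM)
    (S : Fin m → X) (𝒞 : Finset (Fin n → Fin m)) (h𝒞 : 𝒞.Nonempty) (x : X) :
    |gBucket ERM S 𝒞 x| ≤ 1 := by
  have hcard : (0:ℝ) < 𝒞.card := by exact_mod_cast Finset.card_pos.mpr h𝒞
  have hbound : |∑ I ∈ 𝒞, ERM (S ∘ I) x| ≤ (𝒞.card : ℝ) := by
    calc |∑ I ∈ 𝒞, ERM (S ∘ I) x| ≤ ∑ I ∈ 𝒞, |ERM (S ∘ I) x| :=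
          Finset.abs_sum_le_sum_abs _ _
      _ ≤ ∑ _I ∈ 𝒞, (1:ℝ) := by
          refine Finset.sum_le_sum fun I _ => ?_
          rcases hpm _ (hERM (S ∘ I)).1 x with h | h <;> rw [h] <;> norm_num
      _ = (𝒞.card : ℝ) := by simp
  rw [gBucket, abs_mul, abs_of_pos (inv_pos.mpr hcard)]
  calc ((𝒞.card:ℝ))⁻¹ * |∑ I ∈ 𝒞, ERM (S ∘ I) x| ≤ ((𝒞.card:ℝ))⁻¹ * 𝒞.card :=
        mul_le_mul_of_nonneg_left hbound (by positivity)
    _ = 1 := inv_mul_cancel₀ hcard.ne'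

private lemma gAvg_decomp {X : Type} {m n N : ℕ} (ERM : (Fin n → X) → (X → ℝ))
    (C0 : Finset (Fin n → Fin m)) (Cb : Fin N → Finset (Fin n → Fin m))
    (P0 : ℝ) (Pb : Fin N → ℝ)
    (hu : ∀ I : Fin n → Fin m,
      P0 * (if I ∈ C0 then ((C0.card : ℝ))⁻¹ else 0)
        + ∑ i, Pb i * (if I ∈ Cb i then (((Cb i).card : ℝ))⁻¹ else 0)
        = ((m : ℝ) ^ n)⁻¹)
    (S : Fin m → X) (x : X) :
    gAvg ERM S x = P0 * gBucket ERM S C0 x + ∑ i, Pb i * gBucket ERM S (Cb i) x := by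
  have key : ∀ 𝒞 : Finset (Fin n → Fin m),
      (∑ I : Fin n → Fin m, (if I ∈ 𝒞 then ((𝒞.card:ℝ))⁻¹ else 0) * ERM (S ∘ I) x)
        = gBucket ERM S 𝒞 x := by
    intro 𝒞
    rw [gBucket, Finset.mul_sum]
    simp only [ite_mul, zero_mul, Finset.sum_ite_mem, Finset.univ_inter]
  calc gAvg ERM S x = ∑ I : Fin n → Fin m, ((m:ℝ)^n)⁻¹ * ERM (S ∘ I) x := by
        rw [gAvg, Finset.mul_sum]
    _ = ∑ I : Fin n → Fin m,
          ((P0 * (if I ∈ C0 then ((C0.card:ℝ))⁻¹ else 0)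
            + ∑ i, Pb i * (if I ∈ Cb i then (((Cb i).card:ℝ))⁻¹ else 0)) * ERM (S ∘ I) x) :=
        Finset.sum_congr rfl fun I _ => by rw [hu I]
    _ = P0 * gBucket ERM S C0 x + ∑ i, Pb i * gBucket ERM S (Cb i) x := by
        rw [← key C0]
        conv_rhs => rw [Finset.mul_sum]
        have : ∀ i, Pb i * gBucket ERM S (Cb i) x
            = ∑ I : Fin n → Fin m, Pb i * ((if I ∈ Cb i then (((Cb i).card:ℝ))⁻¹ else 0) * ERM (S ∘ I) x) := by
          intro i; rw [← key (Cb i), Finset.mul_sum]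
        simp_rw [this]
        rw [Finset.sum_comm]
        rw [← Finset.sum_add_distrib]
        refine Finset.sum_congr rfl fun I _ => ?_
        rw [add_mul, Finset.sum_mul, mul_assoc]
        exact congrArg _ (Finset.sum_congr rfl fun j _ => by ring)

private lemma pointwise_bad {X : Type} {m n N : ℕ} {C : Set (X → ℝ)} (hpm : ∀ h ∈ C, PM1 h)
    {c : X → ℝ} (hc : c ∈ C) {ERM : (Fin n → X) → (X → ℝ)} (hERM : IsERM C c ERM)
    {C0 : Finset (Fin n → Fin m)} {Cb : Fin N → Finset (Fin n → Fin m)}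
    {P0 : ℝ} {Pb : Fin N → ℝ}
    (hC0 : C0.Nonempty) (hCb : ∀ i, (Cb i).Nonempty) (hP0 : 0 ≤ P0) (hPb : ∀ i, 0 ≤ Pb i)
    (hsum : P0 + ∑ i, Pb i = 1)
    (hu : ∀ I : Fin n → Fin m,
      P0 * (if I ∈ C0 then ((C0.card : ℝ))⁻¹ else 0)
        + ∑ i, Pb i * (if I ∈ Cb i then (((Cb i).card : ℝ))⁻¹ else 0)
        = ((m : ℝ) ^ n)⁻¹)
    (hP0le : P0 ≤ 1/6)
    (S : Fin m → X) (x : X) (hx : gAvg ERM S x * c x ≤ 1/3) :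
    (7:ℝ)/66 ≤ ∑ i ∈ Finset.univ.filter
        (fun i => gBucket ERM S (Cb i) x * c x ≤ 5/6), Pb i := by
  have hcx : |c x| = 1 := by rcases hpm c hc x with h | h <;> rw [h] <;> norm_num
  have hti : ∀ i, |gBucket ERM S (Cb i) x * c x| ≤ 1 := fun i => by
    rw [abs_mul, hcx, mul_one]; exact gBucket_abs_le hpm hERM S (Cb i) (hCb i) x
  have ht0 : |gBucket ERM S C0 x * c x| ≤ 1 := by
    rw [abs_mul, hcx, mul_one]; exact gBucket_abs_le hpm hERM S C0 hC0 x
  have hdec : gAvg ERM S x * c x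
      = P0 * (gBucket ERM S C0 x * c x)
        + ∑ i, Pb i * (gBucket ERM S (Cb i) x * c x) := by
    rw [gAvg_decomp ERM C0 Cb P0 Pb hu S x, add_mul, Finset.sum_mul]
    simp_rw [mul_assoc]
  have hlow0 : -P0 ≤ P0 * (gBucket ERM S C0 x * c x) := by
    nlinarith [abs_le.mp ht0]
  have hup : ∑ i, Pb i * (gBucket ERM S (Cb i) x * c x) ≤ 1/2 := by
    have := hdec ▸ hx
    linarith
  have h1 : ∀ i ∈ Finset.univ.filter (fun i => gBucket ERM S (Cb i) x * c x ≤ 5/6),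
      -Pb i ≤ Pb i * (gBucket ERM S (Cb i) x * c x) := fun i _ => by
    nlinarith [abs_le.mp (hti i), hPb i]
  have h2 : ∀ i ∈ Finset.univ.filter (fun i => ¬ gBucket ERM S (Cb i) x * c x ≤ 5/6),
      Pb i * (5/6) ≤ Pb i * (gBucket ERM S (Cb i) x * c x) := fun i hi => by
    have := (Finset.mem_filter.mp hi).2
    nlinarith [hPb i]
  have hs1 := Finset.sum_le_sum h1
  have hs2 := Finset.sum_le_sum h2
  have hsplit := Finset.sum_filter_add_sum_filter_not Finset.univ
    (fun i => gBucket ERM S (Cb i) x * c x ≤ 5/6)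
    (fun i => Pb i * (gBucket ERM S (Cb i) x * c x))
  have hsplitP := Finset.sum_filter_add_sum_filter_not Finset.univ
    (fun i => gBucket ERM S (Cb i) x * c x ≤ 5/6) Pb
  rw [Finset.sum_neg_distrib] at hs1
  rw [← Finset.sum_mul] at hs2
  linarith
private lemma weight_bad {X : Type} [MeasurableSpace X] (D : Measure X) [IsProbabilityMeasure D]
    {m n N : ℕ} {C : Set (X → ℝ)} (hpm : ∀ h ∈ C, PM1 h)
    {c : X → ℝ} (hc : c ∈ C) {ERM : (Fin n → X) → (X → ℝ)} (hERM : IsERM C c ERM)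
    {C0 : Finset (Fin n → Fin m)} {Cb : Fin N → Finset (Fin n → Fin m)}
    {P0 : ℝ} {Pb : Fin N → ℝ}
    (hC0 : C0.Nonempty) (hCb : ∀ i, (Cb i).Nonempty) (hP0 : 0 ≤ P0) (hPb : ∀ i, 0 ≤ Pb i)
    (hsum : P0 + ∑ i, Pb i = 1)
    (hu : ∀ I : Fin n → Fin m,
      P0 * (if I ∈ C0 then ((C0.card : ℝ))⁻¹ else 0)
        + ∑ i, Pb i * (if I ∈ Cb i then (((Cb i).card : ℝ))⁻¹ else 0)
        = ((m : ℝ) ^ n)⁻¹)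
    (hP0le : P0 ≤ 1/6)
    (τ : ℝ) (hτ : 0 ≤ τ) (S : Fin m → X)
    (hS : 24 * τ < marginLoss D c (gAvg ERM S) (1/3)) :
    (1:ℝ)/23 ≤ ∑ i ∈ Finset.univ.filter
        (fun i => τ < marginLoss D c (gBucket ERM S (Cb i)) (5/6)), Pb i := by
  set A : Set X := {x | gAvg ERM S x * c x ≤ 1/3} with hA
  set Q : Fin N → Set X := fun i => {x | gBucket ERM S (Cb i) x * c x ≤ 5/6} with hQ
  have hmf := markov_frac D Pb hPb Q A (7/66) (by norm_num)
    (fun x hx => pointwise_bad hpm hc hERM hC0 hCb hP0 hPb hsum hu hP0le S x hx)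
  set Lr := (D A).toReal with hLrdef
  have hLr : 24 * τ < Lr := hS
  have hLrpos : 0 < Lr := lt_of_le_of_lt (by positivity) hLr
  have hsplit := Finset.sum_filter_add_sum_filter_not Finset.univ
    (fun i => τ < marginLoss D c (gBucket ERM S (Cb i)) (5/6))
    (fun i => Pb i * (D (Q i ∩ A)).toReal)
  have hbad : ∑ i ∈ Finset.univ.filter
        (fun i => τ < marginLoss D c (gBucket ERM S (Cb i)) (5/6)),
        Pb i * (D (Q i ∩ A)).toReal
      ≤ (∑ i ∈ Finset.univ.filter
        (fun i => τ < marginLoss D c (gBucket ERM S (Cb i)) (5/6)), Pb i) * Lr := by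
    rw [Finset.sum_mul]
    refine Finset.sum_le_sum fun i _ => mul_le_mul_of_nonneg_left ?_ (hPb i)
    exact ENNReal.toReal_mono (measure_ne_top D A) (measure_mono Set.inter_subset_right)
  have hgood : ∑ i ∈ Finset.univ.filter
        (fun i => ¬ τ < marginLoss D c (gBucket ERM S (Cb i)) (5/6)),
        Pb i * (D (Q i ∩ A)).toReal ≤ τ := by
    have step1 : ∀ i ∈ Finset.univ.filter
          (fun i => ¬ τ < marginLoss D c (gBucket ERM S (Cb i)) (5/6)),
        Pb i * (D (Q i ∩ A)).toReal ≤ Pb i * τ := by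
      intro i hi
      have hni : marginLoss D c (gBucket ERM S (Cb i)) (5/6) ≤ τ :=
        not_lt.mp (Finset.mem_filter.mp hi).2
      refine mul_le_mul_of_nonneg_left (le_trans ?_ hni) (hPb i)
      exact ENNReal.toReal_mono (measure_ne_top D _) (measure_mono Set.inter_subset_left)
    calc _ ≤ ∑ i ∈ Finset.univ.filter
          (fun i => ¬ τ < marginLoss D c (gBucket ERM S (Cb i)) (5/6)), Pb i * τ :=
          Finset.sum_le_sum step1
      _ = (∑ i ∈ Finset.univ.filter
          (fun i => ¬ τ < marginLoss D c (gBucket ERM S (Cb i)) (5/6)), Pb i) * τ :=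
          (Finset.sum_mul _ _ _).symm
      _ ≤ (∑ i, Pb i) * τ := by
          refine mul_le_mul_of_nonneg_right ?_ hτ
          exact Finset.sum_le_sum_of_subset_of_nonneg (Finset.filter_subset _ _)
            (fun i _ _ => hPb i)
      _ ≤ 1 * τ := mul_le_mul_of_nonneg_right (by linarith) hτ
      _ = τ := one_mul τ
  set W := ∑ i ∈ Finset.univ.filter
      (fun i => τ < marginLoss D c (gBucket ERM S (Cb i)) (5/6)), Pb i with hWdef
  have hfinal : (7:ℝ)/66 * Lr ≤ W * Lr + τ := by
    calc (7:ℝ)/66 * Lr ≤ ∑ i, Pb i * (D (Q i ∩ A)).toReal := hmf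
      _ = _ + _ := hsplit.symm
      _ ≤ W * Lr + τ := add_le_add hbad hgood
  have h17 : (17:ℝ)/264 * Lr < W * Lr := by linarith
  have hWgt : (17:ℝ)/264 < W := lt_of_mul_lt_mul_right h17 hLrpos.le
  linarith

/-- Lemma 3: if `(F, P)` is `1/6`-representative, then for every `τ ≥ 0`,
`Pr_{S∼D^m}[L^{1/3}_D(g_S) > 24τ] ≤ 23 · max_{1≤i≤N} Pr_{S∼D^m}[L^{5/6}_D(g_{S(𝒞_i)}) > τ]`. -/
theorem structure_lemma
    (X : Type) [MeasurableSpace X] (D : Measure X) [IsProbabilityMeasure D]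
    (C : Set (X → ℝ)) (hpm : ∀ h ∈ C, PM1 h) (c : X → ℝ) (hc : c ∈ C)
    (m n : ℕ) (hm : 0 < m) (hn : 0 < n)
    (ERM : (Fin n → X) → (X → ℝ)) (hERM : IsERM C c ERM)
    (N : ℕ) (hN : 0 < N)
    (C0 : Finset (Fin n → Fin m)) (Cb : Fin N → Finset (Fin n → Fin m))
    (P0 : ℝ) (Pb : Fin N → ℝ)
    (hrep : Representative C0 Cb P0 Pb (1/6))
    (τ : ℝ) (hτ : 0 ≤ τ) :
    ((Measure.pi fun _ : Fin m => D)
        {S : Fin m → X | 24 * τ < marginLoss D c (gAvg ERM S) (1/3)}).toReal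
      ≤ 23 *
        (Finset.univ.sup' ⟨⟨0, hN⟩, Finset.mem_univ _⟩ fun i : Fin N =>
          ((Measure.pi fun _ : Fin m => D)
            {S : Fin m → X | τ < marginLoss D c (gBucket ERM S (Cb i)) (5/6)}).toReal) := by

  obtain ⟨hC0, hCb, hP0, hPb, hsum, hu, hP0le⟩ := hrep
  set μ : Measure (Fin m → X) := Measure.pi fun _ : Fin m => D with hμ
  haveI : IsProbabilityMeasure μ := by rw [hμ]; infer_instance
  set A' : Set (Fin m → X) := {S | 24 * τ < marginLoss D c (gAvg ERM S) (1/3)} with hA'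
  set Q' : Fin N → Set (Fin m → X) :=
    fun i => {S | τ < marginLoss D c (gBucket ERM S (Cb i)) (5/6)} with hQ'
  set M : ℝ := Finset.univ.sup' ⟨⟨0, hN⟩, Finset.mem_univ _⟩
    (fun i : Fin N => (μ (Q' i)).toReal) with hM
  have hMi : ∀ i, (μ (Q' i)).toReal ≤ M := fun i =>
    Finset.le_sup' (fun i : Fin N => (μ (Q' i)).toReal) (Finset.mem_univ i)
  have hM0 : (0:ℝ) ≤ M := le_trans ENNReal.toReal_nonneg (hMi ⟨0, hN⟩)
  have hmf := markov_frac μ Pb hPb Q' A' (1/23) (by norm_num)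
    (fun S hS => weight_bad D hpm hc hERM hC0 hCb hP0 hPb hsum hu hP0le τ hτ S hS)
  have hchain : ∑ i, Pb i * (μ (Q' i ∩ A')).toReal ≤ M := by
    calc ∑ i, Pb i * (μ (Q' i ∩ A')).toReal ≤ ∑ i, Pb i * M := by
          refine Finset.sum_le_sum fun i _ => mul_le_mul_of_nonneg_left ?_ (hPb i)
          exact le_trans
            (ENNReal.toReal_mono (measure_ne_top μ _) (measure_mono Set.inter_subset_left))
            (hMi i)
      _ = (∑ i, Pb i) * M := (Finset.sum_mul _ _ _).symm
      _ ≤ 1 * M := mul_le_mul_of_nonneg_right (by linarith) hM0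
      _ = M := one_mul M
  have := le_trans hmf hchain
  linarith
end
end

section
/- Let F = (𝒞_0,𝒞_1,…,𝒞_N) with probability distribution P be a 1/6-representative pair. Then for every training set S of m examples labeled by c and every x ∈ X with g_S(x)·c(x) ≤ 1/3: Pr_{i∼P}[ g_{S(𝒞_i)}(x)·c(x) ≤ 5/6 and i ≠ 0 ] ≥ 1/12. -/
open MeasureTheory Finset
open scoped ENNReal

noncomputable section

/-- for a `1/6`-representative pair and any `S`, `x` with
`g_S(x)·c(x) ≤ 1/3`, the `P`-probability that the bucket classifier has margin at most
`5/6` on `x` and the bucket differs from `𝒞_0` is at least `1/12`. -/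
theorem bucket_margin_probability
    (X : Type)
    (C : Set (X → ℝ)) (hpm : ∀ h ∈ C, PM1 h) (c : X → ℝ) (hc : c ∈ C)
    (m n : ℕ) (hm : 0 < m) (hn : 0 < n)
    (ERM : (Fin n → X) → (X → ℝ)) (hERM : IsERM C c ERM)
    (N : ℕ) (hN : 0 < N)
    (C0 : Finset (Fin n → Fin m)) (Cb : Fin N → Finset (Fin n → Fin m))
    (P0 : ℝ) (Pb : Fin N → ℝ)
    (hrep : Representative C0 Cb P0 Pb (1/6))
    (S : Fin m → X) (x : X) (hx : gAvg ERM S x * c x ≤ 1/3) :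
    1/12 ≤ ∑ i : Fin N,
      (if gBucket ERM S (Cb i) x * c x ≤ 5/6 then Pb i else 0) := by
  obtain ⟨h0ne, hbne, hP0, hPb, hsum, huni, hP0le⟩ := hrep
  have hcx : c x = 1 ∨ c x = -1 := hpm c hc x
  have hfpm : ∀ I : Fin n → Fin m, ERM (S ∘ I) x = 1 ∨ ERM (S ∘ I) x = -1 :=
    fun I => hpm _ (hERM (S ∘ I)).1 x
  -- bound on bucket values
  have hbd : ∀ (𝒞 : Finset (Fin n → Fin m)), 𝒞.Nonempty →
      |gBucket ERM S 𝒞 x * c x| ≤ 1 := by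
    intro 𝒞 h𝒞
    have hcard : (0:ℝ) < 𝒞.card := by exact_mod_cast h𝒞.card_pos
    have h1 : |gBucket ERM S 𝒞 x| ≤ 1 := by
      unfold gBucket
      rw [abs_mul, abs_inv, abs_of_nonneg hcard.le, inv_mul_le_iff₀ hcard, mul_one]
      calc |∑ I ∈ 𝒞, ERM (S ∘ I) x| ≤ ∑ I ∈ 𝒞, |ERM (S ∘ I) x| :=
            Finset.abs_sum_le_sum_abs _ _
        _ = ∑ _I ∈ 𝒞, (1:ℝ) := by
              refine Finset.sum_congr rfl fun I _ => ?_
              rcases hfpm I with h | h <;> rw [h] <;> norm_num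
        _ = 𝒞.card := by simp
    have h2 : |c x| = 1 := by rcases hcx with h|h <;> rw [h] <;> norm_num
    rw [abs_mul, h2, mul_one]; exact h1
  -- decomposition of gAvg
  have hsub : ∀ 𝒞 : Finset (Fin n → Fin m),
      (∑ I : Fin n → Fin m, (if I ∈ 𝒞 then ((𝒞.card:ℝ))⁻¹ else 0) * ERM (S ∘ I) x)
        = gBucket ERM S 𝒞 x := by
    intro 𝒞
    unfold gBucket
    rw [Finset.mul_sum]
    rw [← Finset.sum_filter_of_ne (p := fun I => I ∈ 𝒞)]
    · rw [Finset.filter_mem_eq_inter, Finset.univ_inter]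
      refine Finset.sum_congr rfl fun I hI => ?_
      rw [if_pos hI]
    · intro I _ h
      by_contra hmem
      rw [if_neg hmem, zero_mul] at h
      exact h rfl
  have hdec : gAvg ERM S x
      = P0 * gBucket ERM S C0 x + ∑ i, Pb i * gBucket ERM S (Cb i) x := by
    unfold gAvg
    rw [Finset.mul_sum]
    have key : ∀ I : Fin n → Fin m, ((m:ℝ)^n)⁻¹ * ERM (S ∘ I) x
        = P0 * ((if I ∈ C0 then ((C0.card:ℝ))⁻¹ else 0) * ERM (S ∘ I) x)
          + ∑ i, Pb i * ((if I ∈ Cb i then (((Cb i).card:ℝ))⁻¹ else 0) * ERM (S ∘ I) x) := by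
      intro I
      rw [← huni I, add_mul, Finset.sum_mul]
      simp only [mul_assoc]
    calc (∑ I : Fin n → Fin m, ((m:ℝ)^n)⁻¹ * ERM (S ∘ I) x)
        = ∑ I : Fin n → Fin m,
            (P0 * ((if I ∈ C0 then ((C0.card:ℝ))⁻¹ else 0) * ERM (S ∘ I) x)
              + ∑ i, Pb i * ((if I ∈ Cb i then (((Cb i).card:ℝ))⁻¹ else 0) * ERM (S ∘ I) x)) :=
          Finset.sum_congr rfl fun I _ => key I
      _ = P0 * gBucket ERM S C0 x + ∑ i, Pb i * gBucket ERM S (Cb i) x := by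
          rw [Finset.sum_add_distrib, ← Finset.mul_sum, hsub C0, Finset.sum_comm]
          congr 1
          refine Finset.sum_congr rfl fun i _ => ?_
          rw [← Finset.mul_sum, hsub (Cb i)]
  -- margin version
  set a : Fin N → ℝ := fun i => gBucket ERM S (Cb i) x * c x with ha
  have hdec' : gAvg ERM S x * c x
      = P0 * (gBucket ERM S C0 x * c x) + ∑ i, Pb i * a i := by
    rw [hdec, add_mul, Finset.sum_mul]
    simp only [ha, mul_assoc]
  set q := ∑ i : Fin N, (if a i ≤ 5/6 then Pb i else 0) with hq
  have hterm : ∀ i ∈ Finset.univ, (if a i ≤ 5/6 then -Pb i else (5/6) * Pb i) ≤ Pb i * a i := by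
    intro i _
    have hb : -1 ≤ a i ∧ a i ≤ 1 := abs_le.mp (hbd (Cb i) (hbne i))
    split_ifs with h
    · nlinarith [hPb i, hb.1]
    · push_neg at h
      nlinarith [hPb i]
  have hsum2 : (∑ i, (if a i ≤ 5/6 then -Pb i else (5/6) * Pb i)) ≤ ∑ i, Pb i * a i :=
    Finset.sum_le_sum hterm
  have hsplit : (∑ i, (if a i ≤ 5/6 then -Pb i else (5/6) * Pb i))
      = (5/6) * (∑ i, Pb i) - (11/6) * q := by
    rw [hq, Finset.mul_sum, Finset.mul_sum, ← Finset.sum_sub_distrib]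
    refine Finset.sum_congr rfl fun i _ => ?_
    split_ifs <;> ring
  have h0 := abs_le.mp (hbd C0 h0ne)
  have hgoal : (1:ℝ)/12 ≤ q := by nlinarith [h0.1, hP0le, hP0]
  exact hgoal
end
end

section
/- For all positive integers m, n with m ≥ 100 and 0.02m ≤ n ≤ m: Pr_{I∼[m]^n}[ |D(I)| ∉ [0.01m, 0.9m] ] ≤ 1/6. -/
open Finset

noncomputable section

/-- The number of distinct values appearing among the entries of `I ∈ [m]^n`. -/
def dcount {m n : ℕ} (I : Fin n → Fin m) : ℕ := (Finset.univ.image I).card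

namespace DistinctAux

lemma card_all_mem (m n : ℕ) (s : Finset (Fin m)) :
    (univ.filter fun I : Fin n → Fin m => ∀ j, I j ∈ s).card = s.card ^ n := by
  have h : (univ.filter fun I : Fin n → Fin m => ∀ j, I j ∈ s)
      = Fintype.piFinset (fun _ : Fin n => s) := by
    ext I; simp [Fintype.mem_piFinset]
  rw [h, Fintype.card_piFinset]
  simp

lemma notmem_card_one (m n : ℕ) (v : Fin m) :
    (univ.filter fun I : Fin n → Fin m => v ∉ univ.image I).card = (m-1) ^ n := by
  have h : (univ.filter fun I : Fin n → Fin m => v ∉ univ.image I)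
      = univ.filter fun I : Fin n → Fin m => ∀ j, I j ∈ univ.erase v := by
    apply filter_congr
    intro I _
    simp [Finset.mem_erase, eq_comm]
  rw [h, card_all_mem, card_erase_of_mem (mem_univ v), card_univ, Fintype.card_fin]

lemma notmem_card_two (m n : ℕ) (v w : Fin m) (hvw : v ≠ w) :
    (univ.filter fun I : Fin n → Fin m => v ∉ univ.image I ∧ w ∉ univ.image I).card
      = (m-2) ^ n := by
  have h : (univ.filter fun I : Fin n → Fin m => v ∉ univ.image I ∧ w ∉ univ.image I)
      = univ.filter fun I : Fin n → Fin m => ∀ j, I j ∈ (univ.erase v).erase w := by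
    apply filter_congr
    intro I _
    simp only [Finset.mem_erase, Finset.mem_univ, and_true, Finset.mem_image, not_exists,
      true_and]
    constructor
    · rintro ⟨h1, h2⟩ j
      exact ⟨h2 j, h1 j⟩
    · intro h
      exact ⟨fun j => (h j).2, fun j => (h j).1⟩
  rw [h, card_all_mem, card_erase_of_mem, card_erase_of_mem (mem_univ v), card_univ,
    Fintype.card_fin]
  · rfl
  · exact Finset.mem_erase.2 ⟨hvw.symm, mem_univ w⟩

/-- number of values not hit -/
def gcount {m n : ℕ} (I : Fin n → Fin m) : ℕ :=
  (univ.filter fun v => v ∉ univ.image I).card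

lemma gcount_add_dcount {m n : ℕ} (I : Fin n → Fin m) : gcount I + dcount I = m := by
  have h := Finset.card_filter_add_card_filter_not
    (s := (univ : Finset (Fin m))) (p := fun v => v ∈ univ.image I)
  have himg : (univ.filter fun v => v ∈ univ.image I) = univ.image I := by
    rw [Finset.filter_mem_eq_inter, Finset.univ_inter]
  rw [himg] at h
  have h2 : dcount I + gcount I = m := by
    simpa [dcount, gcount, card_univ] using h
  omega

lemma gcount_eq_sum {m n : ℕ} (I : Fin n → Fin m) :
    gcount I = ∑ v : Fin m, if v ∉ univ.image I then 1 else 0 := by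
  rw [gcount, Finset.card_filter]

lemma sum_gcount (m n : ℕ) :
    ∑ I : Fin n → Fin m, gcount I = m * (m-1)^n := by
  simp_rw [gcount_eq_sum]
  rw [Finset.sum_comm]
  have : ∀ v : Fin m, (∑ I : Fin n → Fin m, if v ∉ univ.image I then 1 else 0) = (m-1)^n := by
    intro v
    rw [← Finset.card_filter, notmem_card_one]
  simp_rw [this]
  simp [mul_comm]

lemma sum_gcount_sq (m n : ℕ) :
    ∑ I : Fin n → Fin m, gcount I * gcount I
      = m * (m-1)^n + m * (m-1) * (m-2)^n := by
  have step : ∀ I : Fin n → Fin m, gcount I * gcount I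
      = ∑ v : Fin m, ∑ w : Fin m,
          if v ∉ univ.image I ∧ w ∉ univ.image I then 1 else 0 := by
    intro I
    rw [gcount_eq_sum, Finset.sum_mul_sum]
    congr 1; ext v; congr 1; ext w
    rw [ite_zero_mul_ite_zero, mul_one]
  simp_rw [step]
  rw [Finset.sum_comm]
  have inner : ∀ v : Fin m,
      (∑ I : Fin n → Fin m, ∑ w : Fin m,
        if v ∉ univ.image I ∧ w ∉ univ.image I then 1 else 0)
      = (m-1)^n + (m-1) * (m-2)^n := by
    intro v
    rw [Finset.sum_comm]
    have hvv : (∑ I : Fin n → Fin m,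
        if v ∉ univ.image I ∧ v ∉ univ.image I then 1 else 0) = (m-1)^n := by
      simp_rw [and_self]
      rw [← Finset.card_filter, notmem_card_one]
    have hvw : ∀ w : Fin m, w ≠ v → (∑ I : Fin n → Fin m,
        if v ∉ univ.image I ∧ w ∉ univ.image I then 1 else 0) = (m-2)^n := by
      intro w hw
      rw [← Finset.card_filter, notmem_card_two m n v w (Ne.symm hw)]
    rw [← Finset.add_sum_erase _ _ (mem_univ v), hvv]
    congr 1
    rw [Finset.sum_congr rfl (fun w hw => hvw w (Finset.mem_erase.1 hw).1),
      Finset.sum_const, card_erase_of_mem (mem_univ v), card_univ, Fintype.card_fin,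
      smul_eq_mul]
  simp_rw [inner]
  rw [Finset.sum_const, card_univ, Fintype.card_fin, smul_eq_mul, mul_add, mul_assoc]

lemma low_count (m n d : ℕ) (hd : d ≤ m) :
    (univ.filter fun I : Fin n → Fin m => dcount I ≤ d).card ≤ m.choose d * d^n := by
  have hsub : (univ.filter fun I : Fin n → Fin m => dcount I ≤ d)
      ⊆ (powersetCard d (univ : Finset (Fin m))).biUnion
          (fun S => univ.filter fun I => ∀ j, I j ∈ S) := by
    intro I hI
    have hI' : dcount I ≤ d := (Finset.mem_filter.1 hI).2
    obtain ⟨S, hS1, _, hS3⟩ := Finset.exists_subsuperset_card_eq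
      (Finset.subset_univ (univ.image I)) hI' (by simpa [card_univ] using hd)
    refine Finset.mem_biUnion.2 ⟨S, Finset.mem_powersetCard_univ.2 hS3, ?_⟩
    refine Finset.mem_filter.2 ⟨mem_univ _, fun j => hS1 ?_⟩
    exact Finset.mem_image_of_mem I (mem_univ j)
  refine (Finset.card_le_card hsub).trans ?_
  refine le_trans Finset.card_biUnion_le ?_
  have hs : ∀ S ∈ powersetCard d (univ : Finset (Fin m)),
      (univ.filter fun I : Fin n → Fin m => ∀ j, I j ∈ S).card = d ^ n := by
    intro S hS
    rw [card_all_mem, (Finset.mem_powersetCard.1 hS).2]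
  rw [Finset.sum_congr rfl hs, Finset.sum_const, smul_eq_mul, Finset.card_powersetCard,
    card_univ, Fintype.card_fin]

lemma pow_self_le (d : ℕ) : (d : ℝ) ^ d ≤ 3 ^ d * (d.factorial : ℝ) := by
  induction d with
  | zero => simp
  | succ k ih =>
    rcases Nat.eq_zero_or_pos k with hk | hk
    · subst hk; norm_num
    have hk' : (0:ℝ) < k := by exact_mod_cast hk
    have h1 : ((k:ℝ) + 1) ≤ k * Real.exp (1/k) := by
      have := Real.add_one_le_exp (1/(k:ℝ))
      calc (k:ℝ) + 1 = k * (1/k + 1) := by field_simp; ring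
        _ ≤ k * Real.exp (1/k) := by nlinarith
    have h2 : ((k:ℝ) + 1) ^ k ≤ (k * Real.exp (1/k)) ^ k :=
      pow_le_pow_left₀ (by positivity) h1 k
    have h3 : (Real.exp (1/(k:ℝ))) ^ k = Real.exp 1 := by
      rw [← Real.exp_nat_mul]
      congr 1
      field_simp
    have he : Real.exp 1 ≤ 3 := (Real.exp_one_lt_d9.le).trans (by norm_num)
    have h4 : ((k:ℝ)+1)^(k+1) = ((k:ℝ)+1) * ((k:ℝ)+1)^k := by ring
    have h5 : (k * Real.exp (1/(k:ℝ)))^k = (k:ℝ)^k * Real.exp 1 := by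
      rw [mul_pow, h3]
    push_cast [Nat.factorial_succ]
    calc ((k:ℝ)+1)^(k+1) = ((k:ℝ)+1) * ((k:ℝ)+1)^k := h4
      _ ≤ ((k:ℝ)+1) * ((k:ℝ)^k * Real.exp 1) := by
          have := h2.trans_eq h5
          nlinarith
      _ ≤ ((k:ℝ)+1) * ((3:ℝ)^k * (k.factorial : ℝ) * 3) := by
          have h3f : (0:ℝ) < (3:ℝ)^k := by positivity
          have hf : (0:ℝ) < (k.factorial : ℝ) := by exact_mod_cast k.factorial_pos
          nlinarith [mul_le_mul_of_nonneg_left he (le_of_lt (mul_pos h3f hf)),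
            mul_le_mul_of_nonneg_right ih (Real.exp_pos 1).le]
      _ = 3^(k+1) * (((k:ℝ)+1) * (k.factorial:ℝ)) := by ring

lemma key_nat (m n : ℕ) (hm : 2 ≤ m) :
    (m-1) * ((m-2)^n * m^n) ≤ m * ((m-1)^n * (m-1)^n) := by
  obtain ⟨k, rfl⟩ : ∃ k, m = k + 2 := ⟨m - 2, by omega⟩
  have h1 : k + 2 - 1 = k + 1 := by omega
  have h2 : k + 2 - 2 = k := by omega
  rw [h1, h2]
  have hbase : k * (k+2) ≤ (k+1) * (k+1) := by nlinarith
  have hpow : k^n * (k+2)^n ≤ (k+1)^n * (k+1)^n := by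
    rw [← mul_pow, ← mul_pow]
    exact Nat.pow_le_pow_left hbase n
  exact Nat.mul_le_mul (by omega) hpow

lemma q_lower (m n : ℕ) (hm : 100 ≤ m) (hn : n ≤ m) :
    (0.364 : ℝ) * (m:ℝ)^n ≤ ((m-1:ℕ):ℝ)^n := by
  have hm0 : (0:ℝ) < m := by
    have : (100:ℝ) ≤ m := by exact_mod_cast hm
    linarith
  have hmc : ((m-1:ℕ):ℝ) = (m:ℝ) - 1 := by
    have : 1 ≤ m := by omega
    push_cast [this]
    ring
  have hm1 : (99:ℝ) ≤ (m:ℝ) - 1 := by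
    have : (100:ℝ) ≤ m := by exact_mod_cast hm
    linarith
  have hm1' : (0:ℝ) < (m:ℝ) - 1 := by linarith
  set x : ℝ := ((m:ℝ) - 1) / m with hx
  have hx0 : 0 ≤ x := by positivity
  have hx1 : x ≤ 1 := by
    rw [hx, div_le_one hm0]; linarith
  -- step 1 : exp (-(1/(m-1))) ≤ x
  have step1 : Real.exp (-(1/((m:ℝ)-1))) ≤ x := by
    have h := Real.add_one_le_exp (1/((m:ℝ)-1))
    have hmm : (m:ℝ)/((m:ℝ)-1) ≤ Real.exp (1/((m:ℝ)-1)) := by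
      have : (m:ℝ)/((m:ℝ)-1) = 1/((m:ℝ)-1) + 1 := by field_simp; ring
      linarith [this ▸ h]
    rw [Real.exp_neg]
    have hpos : (0:ℝ) < (m:ℝ)/((m:ℝ)-1) := by positivity
    have := one_div_le_one_div_of_le hpos hmm
    calc (Real.exp (1/((m:ℝ)-1)))⁻¹ ≤ ((m:ℝ)/((m:ℝ)-1))⁻¹ := by
          apply inv_anti₀ hpos hmm
      _ = x := by rw [hx, inv_div]
  -- step 3 : (exp (-(1/(m-1))))^m = exp (-(m/(m-1)))
  have step3 : (Real.exp (-(1/((m:ℝ)-1))))^m = Real.exp (-((m:ℝ)/((m:ℝ)-1))) := by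
    rw [← Real.exp_nat_mul]
    congr 1
    field_simp
  -- step 4
  have step4 : Real.exp (-((100:ℝ)/99)) ≤ Real.exp (-((m:ℝ)/((m:ℝ)-1))) := by
    apply Real.exp_le_exp.2
    have h1 : (m:ℝ)/((m:ℝ)-1) ≤ 100/99 := by
      rw [div_le_div_iff₀ hm1' (by norm_num)]
      have : (100:ℝ) ≤ m := by exact_mod_cast hm
      linarith
    linarith
  -- step 5
  have step5 : (0.364:ℝ) ≤ Real.exp (-((100:ℝ)/99)) := by
    have hsplit : Real.exp ((100:ℝ)/99) = Real.exp 1 * Real.exp (1/99) := by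
      rw [← Real.exp_add]; norm_num
    have hsmall : Real.exp ((1:ℝ)/99) ≤ 99/98 := by
      have h := Real.add_one_le_exp (-(1/99:ℝ))
      rw [Real.exp_neg] at h
      have h' : (98/99:ℝ) ≤ (Real.exp (1/99))⁻¹ := by linarith
      have := inv_anti₀ (by norm_num : (0:ℝ) < 98/99) h'
      rw [inv_inv] at this
      calc Real.exp ((1:ℝ)/99) ≤ ((98:ℝ)/99)⁻¹ := this
        _ = 99/98 := by norm_num
    have hbig : Real.exp ((100:ℝ)/99) ≤ 1/0.364 := by
      rw [hsplit]
      have he : Real.exp 1 ≤ 2.7182818286 := Real.exp_one_lt_d9.le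
      have hp : (0:ℝ) < Real.exp (1/99) := Real.exp_pos _
      calc Real.exp 1 * Real.exp ((1:ℝ)/99) ≤ 2.7182818286 * (99/98) := by
            apply mul_le_mul he hsmall hp.le (by norm_num)
        _ ≤ 1/0.364 := by norm_num
    rw [Real.exp_neg]
    have hep : (0:ℝ) < Real.exp ((100:ℝ)/99) := Real.exp_pos _
    calc (0.364:ℝ) = (1/0.364)⁻¹ := by norm_num
      _ ≤ (Real.exp ((100:ℝ)/99))⁻¹ := inv_anti₀ hep hbig
  -- combine
  have hxn : (0.364:ℝ) ≤ x^n := by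
    calc (0.364:ℝ) ≤ Real.exp (-((m:ℝ)/((m:ℝ)-1))) := step5.trans step4
      _ = (Real.exp (-(1/((m:ℝ)-1))))^m := step3.symm
      _ ≤ x^m := pow_le_pow_left₀ (Real.exp_pos _).le step1 m
      _ ≤ x^n := pow_le_pow_of_le_one hx0 hx1 hn
  calc (0.364:ℝ) * (m:ℝ)^n ≤ x^n * (m:ℝ)^n := by
        apply mul_le_mul_of_nonneg_right hxn (by positivity)
    _ = ((m-1:ℕ):ℝ)^n := by
        rw [hmc, ← mul_pow, div_mul_cancel₀]
        exact ne_of_gt hm0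

end DistinctAux

open DistinctAux in
set_option maxHeartbeats 1000000 in
/-- Lemma 5: for `m ≥ 100` and `0.02 m ≤ n ≤ m`, the probability that a
uniform `I ∈ [m]^n` has a number of distinct entries outside `[0.01 m, 0.9 m]` is at
most `1/6`. -/
theorem distinct_count_tail_bound (m n : ℕ) (hm : 100 ≤ m) (hn0 : 0 < n)
    (hn1 : (0.02 : ℝ) * m ≤ (n : ℝ)) (hn2 : n ≤ m) :
    ((Finset.univ.filter fun I : Fin n → Fin m =>
        ¬((0.01 : ℝ) * m ≤ (dcount I : ℝ) ∧ (dcount I : ℝ) ≤ (0.9 : ℝ) * m)).card : ℝ)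
      / (m : ℝ) ^ n ≤ 1/6 := by
  classical
  set d : ℕ := m / 100 with hdDef
  have hmR : (100:ℝ) ≤ m := by exact_mod_cast hm
  have hm0 : (0:ℝ) < m := by linarith
  have hT : (0:ℝ) < (m:ℝ)^n := by positivity
  have hd1 : 1 ≤ d := by omega
  have hdm : 100 * d ≤ m := by omega
  have hdm2 : m < 100 * (d+1) := by omega
  set lowS := (univ.filter fun I : Fin n → Fin m => (dcount I:ℝ) < (0.01:ℝ)*m) with hlowS
  set highS := (univ.filter fun I : Fin n → Fin m => (0.9:ℝ)*m < (dcount I:ℝ)) with hhighS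
  -- splitting
  have hsplit : (Finset.univ.filter fun I : Fin n → Fin m =>
      ¬((0.01 : ℝ) * m ≤ (dcount I : ℝ) ∧ (dcount I : ℝ) ≤ (0.9 : ℝ) * m))
      ⊆ lowS ∪ highS := by
    intro I hI
    have hI' := (Finset.mem_filter.1 hI).2
    rw [not_and_or, not_le, not_le] at hI'
    rcases hI' with h | h
    · exact Finset.mem_union_left _ (Finset.mem_filter.2 ⟨mem_univ _, h⟩)
    · exact Finset.mem_union_right _ (Finset.mem_filter.2 ⟨mem_univ _, h⟩)
  -- LOW bound
  have hlow : (lowS.card : ℝ) ≤ 0.06 * (m:ℝ)^n := by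
    have hsub : lowS ⊆ univ.filter fun I : Fin n → Fin m => dcount I ≤ d := by
      intro I hI
      refine Finset.mem_filter.2 ⟨mem_univ _, ?_⟩
      have hI' := (Finset.mem_filter.1 hI).2
      by_contra hcon
      push_neg at hcon
      have h1 : ((d:ℝ)+1) ≤ (dcount I : ℝ) := by exact_mod_cast hcon
      have h2 : ((d:ℝ)+1) < 0.01 * m := lt_of_le_of_lt h1 hI'
      have h3 : (100:ℝ) * ((d:ℝ)+1) < m := by linarith
      have h4 : ((100*(d+1):ℕ):ℝ) < (m:ℝ) := by push_cast; linarith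
      have h5 : (100*(d+1):ℕ) < m := by exact_mod_cast h4
      omega
    have hcount : lowS.card ≤ m.choose d * d^n :=
      le_trans (Finset.card_le_card hsub) (low_count m n d (by omega))
    have hchoose600 : (m.choose d : ℝ) ≤ 600^d := by
      have hnat : d.factorial * m.choose d ≤ m ^ d := by
        rw [← Nat.descFactorial_eq_factorial_mul_choose]
        exact Nat.descFactorial_le_pow m d
      have hR : (m.choose d : ℝ) * (d.factorial:ℝ) ≤ (m:ℝ)^d := by
        exact_mod_cast (mul_comm (d.factorial) (m.choose d)) ▸ hnat
      have hfp : (0:ℝ) < (d.factorial:ℝ) := by exact_mod_cast d.factorial_pos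
      have hm200 : (m:ℝ) ≤ 200*d := by
        have : m ≤ 200*d := by omega
        exact_mod_cast this
      have h1 : (m:ℝ)^d ≤ (200*(d:ℝ))^d :=
        pow_le_pow_left₀ hm0.le hm200 d
      have h2 : (200*(d:ℝ))^d = 200^d * (d:ℝ)^d := mul_pow _ _ _
      have h3 : (200:ℝ)^d * (d:ℝ)^d ≤ 200^d * (3^d * d.factorial) :=
        mul_le_mul_of_nonneg_left (pow_self_le d) (by positivity)
      have h4 : (200:ℝ)^d * (3^d * (d.factorial:ℝ)) = 600^d * d.factorial := by
        rw [← mul_assoc, ← mul_pow]; norm_num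
      have h5 : (m.choose d : ℝ) * (d.factorial:ℝ) ≤ 600^d * d.factorial := by
        calc (m.choose d : ℝ) * (d.factorial:ℝ) ≤ (m:ℝ)^d := hR
          _ ≤ 200^d * (d:ℝ)^d := h1.trans_eq h2
          _ ≤ 200^d * (3^d * d.factorial) := h3
          _ = 600^d * d.factorial := h4
      exact le_of_mul_le_mul_right h5 hfp
    have hdn : (d:ℝ)^n ≤ (m:ℝ)^n / 100^n := by
      have h1 : (d:ℝ) ≤ (m:ℝ)/100 := by
        have : ((100*d:ℕ):ℝ) ≤ m := by exact_mod_cast hdm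
        push_cast at this
        linarith
      calc (d:ℝ)^n ≤ ((m:ℝ)/100)^n := pow_le_pow_left₀ (by positivity) h1 n
        _ = (m:ℝ)^n / 100^n := div_pow _ _ _
    have h2dn : 2*d ≤ n := by
      have h100 : ((100*d:ℕ):ℝ) ≤ (m:ℝ) := by exact_mod_cast hdm
      have : ((2*d:ℕ):ℝ) ≤ (n:ℝ) := by push_cast at h100 ⊢; linarith
      exact_mod_cast this
    have hdiv : (m:ℝ)^n / 100^n ≤ (m:ℝ)^n / 100^(2*d) := by
      apply div_le_div_of_nonneg_left (by positivity) (by positivity)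
      exact pow_le_pow_right₀ (by norm_num) h2dn
    calc (lowS.card : ℝ) ≤ (m.choose d : ℝ) * (d:ℝ)^n := by exact_mod_cast hcount
      _ ≤ 600^d * ((m:ℝ)^n / 100^n) := by
          apply mul_le_mul hchoose600 hdn (by positivity) (by positivity)
      _ ≤ 600^d * ((m:ℝ)^n / 100^(2*d)) :=
          mul_le_mul_of_nonneg_left hdiv (by positivity)
      _ = (0.06:ℝ)^d * (m:ℝ)^n := by
          rw [pow_mul, show ((100:ℝ)^2) = 10000 from by norm_num,
            show (0.06:ℝ) = 600/10000 from by norm_num, div_pow]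
          ring
      _ ≤ 0.06 * (m:ℝ)^n := by
          have : (0.06:ℝ)^d ≤ 0.06^1 :=
            pow_le_pow_of_le_one (by norm_num) (by norm_num) hd1
          rw [pow_one] at this
          exact mul_le_mul_of_nonneg_right this (by positivity)
  -- HIGH bound
  have hhigh : (highS.card : ℝ) ≤ 0.053 * (m:ℝ)^n := by
    set T : ℝ := (m:ℝ)^n with hTdef
    set P1 : ℝ := ((m-1:ℕ):ℝ)^n with hP1def
    set P2 : ℝ := ((m-2:ℕ):ℝ)^n with hP2def
    set c1 : ℝ := ((m-1:ℕ):ℝ) with hc1def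
    set q : ℝ := P1 / T with hqdef
    have hTq : T * q = P1 := by
      rw [hqdef]; field_simp
    have hq364 : (0.364:ℝ) ≤ q := by
      rw [hqdef, le_div_iff₀ hT]
      exact q_lower m n hm hn2
    have hsum1R : ∑ I : Fin n → Fin m, (gcount I:ℝ) = m * P1 := by
      have := sum_gcount m n
      calc ∑ I : Fin n → Fin m, (gcount I:ℝ)
          = ((∑ I : Fin n → Fin m, gcount I : ℕ) : ℝ) := by push_cast; rfl
        _ = m * P1 := by rw [this]; push_cast; rfl
    have hsum2R : ∑ I : Fin n → Fin m, (gcount I:ℝ)^2 = m * P1 + m * c1 * P2 := by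
      have := sum_gcount_sq m n
      calc ∑ I : Fin n → Fin m, (gcount I:ℝ)^2
          = ((∑ I : Fin n → Fin m, gcount I * gcount I : ℕ) : ℝ) := by
            push_cast [sq]; rfl
        _ = m * P1 + m * c1 * P2 := by rw [this]; push_cast; rfl
    have hcard : ((univ : Finset (Fin n → Fin m)).card : ℝ) = T := by
      rw [card_univ, Fintype.card_fun, Fintype.card_fin, Fintype.card_fin, hTdef]
      push_cast; rfl
    -- variance bound
    have hkey : c1 * (P2 * T) ≤ (m:ℝ) * (P1 * P1) := by
      have := key_nat m n (by omega)
      have hcast : (((m-1) * ((m-2)^n * m^n) : ℕ):ℝ) ≤ ((m * ((m-1)^n * (m-1)^n) : ℕ):ℝ) := by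
        exact_mod_cast this
      push_cast at hcast
      rw [hc1def, hP2def, hTdef, hP1def]
      convert hcast using 2
    have h6 : (m:ℝ) * c1 * P2 ≤ q * (m:ℝ)^2 * P1 := by
      calc (m:ℝ) * c1 * P2 = (m * c1 * P2) * (T/T) := by
            rw [div_self hT.ne']; ring
        _ = (c1 * (P2 * T)) * ((m:ℝ)/T) := by ring
        _ ≤ ((m:ℝ) * (P1 * P1)) * ((m:ℝ)/T) :=
            mul_le_mul_of_nonneg_right hkey (by positivity)
        _ = q * (m:ℝ)^2 * P1 := by rw [hqdef]; ring
    have hvar : ∑ I : Fin n → Fin m, ((gcount I:ℝ) - q*m)^2 ≤ m * P1 := by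
      have hexp : ∑ I : Fin n → Fin m, ((gcount I:ℝ) - q*m)^2
          = (∑ I : Fin n → Fin m, (gcount I:ℝ)^2)
            - 2*(q*m)*(∑ I : Fin n → Fin m, (gcount I:ℝ)) + T*(q*m)^2 := by
        have : ∀ I : Fin n → Fin m, ((gcount I:ℝ) - q*m)^2
            = (gcount I:ℝ)^2 - 2*(q*m)*(gcount I:ℝ) + (q*m)^2 := by intro I; ring
        simp_rw [this]
        rw [Finset.sum_add_distrib, Finset.sum_sub_distrib, ← Finset.mul_sum,
          Finset.sum_const, nsmul_eq_mul, hcard]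
      have h7 : T*(q*m)^2 = q*(m:ℝ)^2*P1 := by rw [← hTq]; ring
      rw [hexp, hsum1R, hsum2R, h7]
      nlinarith [h6]
    -- chebyshev
    have hpt : ∀ I ∈ highS, ((q - 0.1)*m)^2 ≤ ((gcount I:ℝ) - q*m)^2 := by
      intro I hI
      have hI' : (0.9:ℝ)*m < (dcount I:ℝ) := (Finset.mem_filter.1 hI).2
      have hgd : gcount I + dcount I = m := gcount_add_dcount I
      have hg : (gcount I:ℝ) + (dcount I:ℝ) = (m:ℝ) := by exact_mod_cast hgd
      have hglt : (gcount I:ℝ) < 0.1*m := by linarith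
      have h8 : (q-0.1)*m ≤ q*m - (gcount I:ℝ) := by
        have : (q-0.1)*m = q*m - 0.1*m := by ring
        linarith
      have h9 : (0:ℝ) ≤ (q-0.1)*m := mul_nonneg (by linarith) hm0.le
      calc ((q - 0.1)*m)^2 ≤ (q*m - (gcount I:ℝ))^2 := pow_le_pow_left₀ h9 h8 2
        _ = ((gcount I:ℝ) - q*m)^2 := by ring
    have hcheb : (highS.card:ℝ) * ((q-0.1)*m)^2 ≤ m * P1 := by
      calc (highS.card:ℝ) * ((q-0.1)*m)^2
          = ∑ _I ∈ highS, ((q-0.1)*m)^2 := by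
            rw [Finset.sum_const, nsmul_eq_mul]
        _ ≤ ∑ I ∈ highS, ((gcount I:ℝ) - q*m)^2 := Finset.sum_le_sum hpt
        _ ≤ ∑ I : Fin n → Fin m, ((gcount I:ℝ) - q*m)^2 :=
            Finset.sum_le_sum_of_subset_of_nonneg (Finset.subset_univ _)
              (fun I _ _ => sq_nonneg _)
        _ ≤ m * P1 := hvar
    have hfinal : (m:ℝ) * P1 ≤ 0.053 * T * ((q-0.1)*m)^2 := by
      have hmp1 : (m:ℝ) * P1 = q * m * T := by rw [← hTq]; ring
      rw [hmp1]
      have hqm : q ≤ 0.053 * (q-0.1)^2 * m := by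
        nlinarith [sq_nonneg (q - 0.364), mul_nonneg (sq_nonneg (q-0.1)) (by linarith : (0:ℝ) ≤ (m:ℝ) - 100)]
      calc q * m * T ≤ (0.053 * (q-0.1)^2 * m) * m * T := by
            apply mul_le_mul_of_nonneg_right (mul_le_mul_of_nonneg_right hqm hm0.le) hT.le
        _ = 0.053 * T * ((q-0.1)*m)^2 := by ring
    have hpos2 : (0:ℝ) < ((q-0.1)*m)^2 := by
      have h10 : (0:ℝ) < (q-0.1)*m := mul_pos (by linarith) hm0
      positivity
    exact le_of_mul_le_mul_right (hcheb.trans hfinal) hpos2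
  -- combine
  rw [div_le_iff₀ hT]
  have hcards : ((Finset.univ.filter fun I : Fin n → Fin m =>
      ¬((0.01 : ℝ) * m ≤ (dcount I : ℝ) ∧ (dcount I : ℝ) ≤ (0.9 : ℝ) * m)).card : ℝ)
      ≤ (lowS.card : ℝ) + (highS.card : ℝ) := by
    have h1 := Finset.card_le_card hsplit
    have h2 := Finset.card_union_le lowS highS
    exact_mod_cast le_trans h1 h2
  linarith
end
end

section
/- For all positive integers m, n with 0.02m ≤ n ≤ m: Pr_{I∼[m]^n}[ |D(I)| < 0.01m ] ≤ (e/100)^{0.01m}. -/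
open Finset

noncomputable section

lemma count_le (m n s : ℕ) (hsm : s ≤ m) :
    ((Finset.univ.filter fun I : Fin n → Fin m => dcount I ≤ s).card)
      ≤ m.choose s * s ^ n := by
  have hsub : (Finset.univ.filter fun I : Fin n → Fin m => dcount I ≤ s) ⊆
      (Finset.powersetCard s (Finset.univ : Finset (Fin m))).biUnion
        (fun S => Fintype.piFinset fun _ : Fin n => S) := by
    intro I hI
    simp only [mem_filter, mem_univ, true_and] at hI
    obtain ⟨S, hsub, hScard⟩ := Finset.exists_superset_card_eq hI (by simpa using hsm)
    refine Finset.mem_biUnion.2 ⟨S, ?_, ?_⟩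
    · simp [Finset.mem_powersetCard, hScard]
    · exact Fintype.mem_piFinset.2 fun i => hsub (Finset.mem_image_of_mem I (mem_univ i))
  calc ((Finset.univ.filter fun I : Fin n → Fin m => dcount I ≤ s).card)
      ≤ _ := Finset.card_le_card hsub
    _ ≤ ∑ S ∈ Finset.powersetCard s (Finset.univ : Finset (Fin m)),
          (Fintype.piFinset fun _ : Fin n => S).card := Finset.card_biUnion_le
    _ = m.choose s * s ^ n := by
        rw [Finset.sum_congr rfl (fun S hS => ?_), Finset.sum_const,
          Finset.card_powersetCard, Finset.card_univ, Fintype.card_fin, smul_eq_mul]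
        rw [Fintype.card_piFinset]
        simp [(Finset.mem_powersetCard.1 hS).2]

lemma choose_bound (m s : ℕ) (hs : 0 < s) :
    (m.choose s : ℝ) ≤ Real.exp 1 ^ s * (m : ℝ) ^ s / (s : ℝ) ^ s := by
  have hf : (0:ℝ) < (s.factorial : ℝ) := by positivity
  have hss : (0:ℝ) < (s:ℝ) ^ s := by positivity
  have hnat : s.factorial * m.choose s ≤ m ^ s :=
    le_trans (le_of_eq (Nat.descFactorial_eq_factorial_mul_choose m s).symm)
      (m.descFactorial_le_pow s)
  have h1 : (m.choose s : ℝ) ≤ (m:ℝ)^s / (s.factorial : ℝ) := by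
    rw [le_div_iff₀ hf]
    calc (m.choose s : ℝ) * s.factorial = ((s.factorial * m.choose s : ℕ) : ℝ) := by
          push_cast; ring
      _ ≤ ((m ^ s : ℕ) : ℝ) := by exact_mod_cast hnat
      _ = (m:ℝ)^s := by push_cast; ring
  have h2 : ((s:ℝ))^s / (s.factorial:ℝ) ≤ Real.exp s :=
    Real.pow_div_factorial_le_exp (x := (s:ℝ)) (by positivity) s
  have h3 : Real.exp (s:ℝ) = Real.exp 1 ^ s := by
    rw [← Real.exp_nat_mul]; simp
  have key : (m:ℝ)^s / (s.factorial:ℝ)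
      = (m:ℝ)^s / (s:ℝ)^s * (((s:ℝ))^s / (s.factorial:ℝ)) := by
    field_simp
  calc (m.choose s : ℝ) ≤ (m:ℝ)^s / (s.factorial:ℝ) := h1
    _ = (m:ℝ)^s / (s:ℝ)^s * (((s:ℝ))^s / (s.factorial:ℝ)) := key
    _ ≤ (m:ℝ)^s / (s:ℝ)^s * Real.exp s := by
        exact mul_le_mul_of_nonneg_left h2 (by positivity)
    _ = Real.exp 1 ^ s * (m : ℝ) ^ s / (s : ℝ) ^ s := by rw [h3]; ring

/-- for `0.02 m ≤ n ≤ m`, the probability that a uniform `I ∈ [m]^n` has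
fewer than `0.01 m` distinct entries is at most `(e/100)^{0.01 m}`. -/
theorem distinct_count_lower_tail (m n : ℕ) (hm : 0 < m) (hn0 : 0 < n)
    (hn1 : (0.02 : ℝ) * m ≤ (n : ℝ)) (hn2 : n ≤ m) :
    ((Finset.univ.filter fun I : Fin n → Fin m =>
        (dcount I : ℝ) < (0.01 : ℝ) * m).card : ℝ) / (m : ℝ) ^ n
      ≤ (Real.exp 1 / 100) ^ ((0.01 : ℝ) * m) := by
  set x : ℝ := (0.01 : ℝ) * m with hxdef
  have hm' : (0:ℝ) < m := by exact_mod_cast hm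
  have hx0 : 0 < x := by positivity
  have hmn : (0:ℝ) < (m:ℝ) ^ n := by positivity
  have hRHS : (0:ℝ) ≤ (Real.exp 1 / 100) ^ x := Real.rpow_nonneg (by positivity) x
  set k : ℕ := ⌈x⌉₊ with hkdef
  -- rewrite the condition
  have hcond : ∀ I : Fin n → Fin m, ((dcount I : ℝ) < x ↔ dcount I < k) := by
    intro I; exact (Nat.lt_ceil).symm
  by_cases hk : k ≤ 1
  · -- filter is empty
    have hempty : (Finset.univ.filter fun I : Fin n → Fin m =>
        (dcount I : ℝ) < (0.01 : ℝ) * m) = ∅ := by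
      refine Finset.filter_eq_empty_iff.2 fun I _ => ?_
      rw [show ((0.01:ℝ) * m) = x from rfl, hcond I]
      have h1 : 1 ≤ dcount I := by
        haveI : Nonempty (Fin n) := ⟨⟨0, hn0⟩⟩
        have : (Finset.univ.image I).Nonempty :=
          (Finset.univ_nonempty (α := Fin n)).image I
        simpa [dcount, Finset.card_pos] using this
      omega
    rw [hempty]
    simpa using hRHS
  · push_neg at hk
    set s : ℕ := k - 1 with hsdef
    have hs1 : 1 ≤ s := by omega
    have hsx : (s : ℝ) < x := Nat.lt_ceil.1 (by omega)
    have hsm : s ≤ m := by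
      have : (s:ℝ) < m := lt_of_lt_of_le hsx (by rw [hxdef]; nlinarith)
      exact_mod_cast this.le
    have hsn : s ≤ n := by
      have : (s:ℝ) < n := lt_of_lt_of_le hsx (by linarith)
      exact_mod_cast this.le
    have hfilter : (Finset.univ.filter fun I : Fin n → Fin m =>
        (dcount I : ℝ) < (0.01 : ℝ) * m)
        = Finset.univ.filter fun I : Fin n → Fin m => dcount I ≤ s := by
      refine Finset.filter_congr fun I _ => ?_
      rw [show ((0.01:ℝ) * m) = x from rfl, hcond I]
      constructor <;> (intro; omega)
    rw [hfilter]
    have hcard : ((Finset.univ.filter fun I : Fin n → Fin m => dcount I ≤ s).card : ℝ)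
        ≤ (m.choose s : ℝ) * (s:ℝ) ^ n := by
      exact_mod_cast Nat.cast_le.2 (count_le m n s hsm)
    have hs0 : (0:ℝ) < (s:ℝ) := by exact_mod_cast hs1
    have hchoose := choose_bound m s hs1
    -- main chain
    have hsplit : (Real.exp 1 ^ s * (m:ℝ) ^ s / (s:ℝ) ^ s) * (s:ℝ) ^ n / (m:ℝ) ^ n
        = Real.exp 1 ^ s * ((s:ℝ)/(m:ℝ)) ^ (n - s) := by
      have hns : s + (n - s) = n := by omega
      rw [div_pow, ← hns, pow_add, pow_add]
      field_simp
      rw [Nat.add_sub_cancel_left]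
      ring
    have hnum : ((Finset.univ.filter fun I : Fin n → Fin m => dcount I ≤ s).card : ℝ)
        ≤ (Real.exp 1 ^ s * (m:ℝ) ^ s / (s:ℝ) ^ s) * (s:ℝ) ^ n :=
      hcard.trans (mul_le_mul_of_nonneg_right hchoose (by positivity))
    have hstep1 : ((Finset.univ.filter fun I : Fin n → Fin m => dcount I ≤ s).card : ℝ)
        / (m:ℝ) ^ n ≤ Real.exp 1 ^ s * ((s:ℝ)/(m:ℝ)) ^ (n - s) := by
      rw [← hsplit]
      gcongr ?_ / _
    have hsm100 : (s:ℝ)/(m:ℝ) ≤ 1/100 := by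
      rw [div_le_div_iff₀ hm' (by norm_num)]
      nlinarith
    have hstep2 : Real.exp 1 ^ s * ((s:ℝ)/(m:ℝ)) ^ (n - s)
        ≤ Real.exp 1 ^ s * ((1:ℝ)/100) ^ (n - s) :=
      mul_le_mul_of_nonneg_left (pow_le_pow_left₀ (by positivity) hsm100 _) (by positivity)
    have hcastns : (((n - s : ℕ)) : ℝ) = (n:ℝ) - (s:ℝ) := by
      push_cast [Nat.cast_sub hsn]; ring
    have hxns : x ≤ (((n - s : ℕ)) : ℝ) := by rw [hcastns]; linarith
    have hstep3 : Real.exp 1 ^ s * ((1:ℝ)/100) ^ (n - s)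
        ≤ (Real.exp 1 / 100) ^ x := by
      have h1 : Real.exp 1 ^ s = Real.exp 1 ^ ((s:ℕ):ℝ) := (Real.rpow_natCast _ s).symm
      have h2 : ((1:ℝ)/100) ^ (n - s) = ((1:ℝ)/100) ^ (((n - s : ℕ)):ℝ) :=
        (Real.rpow_natCast _ (n - s)).symm
      rw [h1, h2]
      have ha : Real.exp 1 ^ ((s:ℕ):ℝ) ≤ Real.exp 1 ^ x :=
        Real.rpow_le_rpow_of_exponent_le (Real.one_le_exp (by norm_num)) hsx.le
      have hb : ((1:ℝ)/100) ^ (((n - s : ℕ)):ℝ) ≤ ((1:ℝ)/100) ^ x :=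
        Real.rpow_le_rpow_of_exponent_ge (by norm_num) (by norm_num) hxns
      calc Real.exp 1 ^ ((s:ℕ):ℝ) * ((1:ℝ)/100) ^ (((n - s : ℕ)):ℝ)
          ≤ Real.exp 1 ^ x * ((1:ℝ)/100) ^ x := by
            apply mul_le_mul ha hb (Real.rpow_nonneg (by norm_num) _)
              (Real.rpow_nonneg (Real.exp_pos 1).le _)
        _ = (Real.exp 1 / 100) ^ x := by
            rw [← Real.mul_rpow (Real.exp_pos 1).le (by norm_num), mul_one_div]
    exact hstep1.trans (hstep2.trans hstep3)
end
end

section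
/- For all positive integers m, n with n ≤ m: Pr_{I∼[m]^n}[ |D(I)| ≥ 0.9m ] ≤ 6·e^{−0.2m}. -/
open Finset

noncomputable section

private lemma count_injOn (m n : ℕ) (P : Finset (Fin n)) :
    (univ.filter fun I : Fin n → Fin m => Set.InjOn I ↑P).card
      ≤ m.descFactorial P.card * m ^ (n - P.card) := by
  classical
  rw [← Fintype.card_subtype]
  refine le_trans (Fintype.card_le_of_injective
    (fun I : {I : Fin n → Fin m // Set.InjOn I ↑P} =>
      ((⟨fun p => I.1 p.1, fun p q h =>
          Subtype.ext (I.2 (by simp [p.2]) (by simp [q.2]) h)⟩ :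
            {x // x ∈ P} ↪ Fin m),
        fun q : {x // x ∈ (Pᶜ : Finset (Fin n))} => I.1 q.1)) ?_) ?_
  · rintro ⟨I, hI⟩ ⟨J, hJ⟩ h
    simp only [Prod.mk.injEq, Function.Embedding.mk.injEq] at h
    obtain ⟨h1, h2⟩ := h
    apply Subtype.ext; funext x
    by_cases hx : x ∈ P
    · exact DFunLike.congr_fun h1 ⟨x, hx⟩
    · exact congrFun h2 ⟨x, by simp [hx]⟩
  · rw [Fintype.card_prod, Fintype.card_embedding_eq, Fintype.card_fun]
    simp [Finset.card_compl]

private lemma count_ge (m n k : ℕ) :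
    (univ.filter fun I : Fin n → Fin m => k ≤ dcount I).card
      ≤ n.choose k * (m.descFactorial k * m ^ (n - k)) := by
  classical
  have hsub : (univ.filter fun I : Fin n → Fin m => k ≤ dcount I)
      ⊆ (powersetCard k (univ : Finset (Fin n))).biUnion
          (fun P => univ.filter fun I => Set.InjOn I ↑P) := by
    intro I hI
    simp only [mem_filter, mem_univ, true_and] at hI
    obtain ⟨T, hT, hTcard⟩ := Finset.exists_subset_card_eq (hI : k ≤ (univ.image I).card)
    have hex : ∀ y ∈ T, ∃ x : Fin n, I x = y := by
      intro y hy
      have := hT hy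
      rw [Finset.mem_image] at this
      obtain ⟨x, _, hx⟩ := this
      exact ⟨x, hx⟩
    choose g hg using hex
    set P : Finset (Fin n) := T.attach.image (fun y => g y.1 y.2) with hP
    have hgi : Set.InjOn (fun y : {x // x ∈ T} => g y.1 y.2) ↑T.attach := by
      intro a _ b _ hab
      have hab' : g a.1 a.2 = g b.1 b.2 := hab
      have : I (g a.1 a.2) = I (g b.1 b.2) := by rw [hab']
      rw [hg a.1 a.2, hg b.1 b.2] at this
      exact Subtype.ext this
    have hPcard : P.card = k := by
      rw [hP, Finset.card_image_of_injOn hgi, card_attach, hTcard]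
    have hPinj : Set.InjOn I ↑P := by
      intro x hx y hy hxy
      simp only [hP, Finset.coe_image, Set.mem_image, Finset.mem_coe, mem_attach] at hx hy
      obtain ⟨a, _, ha⟩ := hx
      obtain ⟨b, _, hb⟩ := hy
      rw [← ha, ← hb] at hxy ⊢
      rw [hg a.1 a.2, hg b.1 b.2] at hxy
      rw [Subtype.ext hxy]
    refine Finset.mem_biUnion.mpr ⟨P, ?_, ?_⟩
    · rw [Finset.mem_powersetCard]; exact ⟨subset_univ _, hPcard⟩
    · simp only [mem_filter, mem_univ, true_and]; exact hPinj
  calc (univ.filter fun I : Fin n → Fin m => k ≤ dcount I).card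
      ≤ ∑ P ∈ powersetCard k (univ : Finset (Fin n)),
          (univ.filter fun I : Fin n → Fin m => Set.InjOn I ↑P).card :=
        le_trans (card_le_card hsub) (card_biUnion_le)
    _ ≤ ∑ P ∈ powersetCard k (univ : Finset (Fin n)), m.descFactorial k * m ^ (n - k) := by
        apply sum_le_sum
        intro P hP
        have hPk : P.card = k := (Finset.mem_powersetCard.mp hP).2
        have := count_injOn m n P
        rwa [hPk] at this
    _ = n.choose k * (m.descFactorial k * m ^ (n - k)) := by
        rw [sum_const, card_powersetCard, card_univ, Fintype.card_fin, smul_eq_mul]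

private lemma quartic_pointwise {x : ℝ} (h0 : 0 ≤ x) (h1 : x < 1) :
    1 - x ≤ Real.exp (-(x + x^2/2 + x^3/3 + x^4/4)) := by
  set Q : ℝ → ℝ := fun t => t + t^2/2 + t^3/3 + t^4/4 with hQ
  set F : ℝ → ℝ := fun t => (1 - t) * Real.exp (Q t) with hF
  have hd : ∀ t : ℝ, HasDerivAt F (-t^4 * Real.exp (Q t)) t := by
    intro t
    have hq : HasDerivAt Q (1 + t + t^2 + t^3) t := by
      have := (((hasDerivAt_id t).add (((hasDerivAt_pow 2 t).div_const 2))).add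
        ((hasDerivAt_pow 3 t).div_const 3)).add ((hasDerivAt_pow 4 t).div_const 4)
      exact this.congr_deriv (by norm_num)
    have h1t : HasDerivAt (fun t : ℝ => 1 - t) (-1) t := by
      simpa using (hasDerivAt_id t).const_sub (1:ℝ)
    have := h1t.mul hq.exp
    exact this.congr_deriv (by ring)
  have hanti : AntitoneOn F (Set.Icc 0 1) := by
    apply antitoneOn_of_deriv_nonpos (convex_Icc 0 1)
    · exact fun t _ => (hd t).continuousAt.continuousWithinAt
    · exact fun t _ => (hd t).differentiableAt.differentiableWithinAt
    · intro t ht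
      rw [(hd t).deriv]
      have : (0:ℝ) ≤ t^4 := by positivity
      nlinarith [Real.exp_pos (Q t)]
  have h01 : (0:ℝ) ∈ Set.Icc (0:ℝ) 1 := by constructor <;> norm_num
  have hx1 : x ∈ Set.Icc (0:ℝ) 1 := ⟨h0, h1.le⟩
  have := hanti h01 hx1 h0
  have hF0 : F 0 = 1 := by simp [hF, hQ]
  rw [hF0] at this
  have hexp : (0:ℝ) < Real.exp (Q x) := Real.exp_pos _
  have : 1 - x ≤ 1 / Real.exp (Q x) := by
    rw [le_div_iff₀ hexp]
    simpa [hF] using this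
  calc 1 - x ≤ 1 / Real.exp (Q x) := this
    _ = Real.exp (-(x + x^2/2 + x^3/3 + x^4/4)) := by
        rw [Real.exp_neg]; simp [hQ]

private lemma sum_range_id' (k : ℕ) : ∑ s ∈ range k, (s:ℝ) = k*(k-1)/2 := by
  induction k with
  | zero => simp
  | succ k ih => rw [sum_range_succ, ih]; push_cast; ring

private lemma sum_range_sq' (k : ℕ) : ∑ s ∈ range k, (s:ℝ)^2 = k*(k-1)*(2*k-1)/6 := by
  induction k with
  | zero => simp
  | succ k ih => rw [sum_range_succ, ih]; push_cast; ring

private lemma sum_range_cube' (k : ℕ) : ∑ s ∈ range k, (s:ℝ)^3 = (k*(k-1))^2/4 := by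
  induction k with
  | zero => simp
  | succ k ih => rw [sum_range_succ, ih]; push_cast; ring

private lemma sum_range_quart' (k : ℕ) :
    ∑ s ∈ range k, (s:ℝ)^4 = k*(k-1)*(2*k-1)*(3*k^2-3*k-1)/30 := by
  induction k with
  | zero => simp
  | succ k ih => rw [sum_range_succ, ih]; push_cast; ring

private lemma A_bound {M K : ℝ} (hM : 50 ≤ M) (hK : 9*M/10 ≤ K) :
    (11/20)*M ≤ K*(K-1)/2/M + K*(K-1)*(2*K-1)/6/(2*M^2)
      + (K*(K-1))^2/4/(3*M^3) + K*(K-1)*(2*K-1)*(3*K^2-3*K-1)/30/(4*M^4) := by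
  have hM0 : (0:ℝ) < M := by linarith
  set a : ℝ := 9*M/10 with ha
  have ha45 : 45 ≤ a := by rw [ha]; linarith
  have hK45 : 45 ≤ K := le_trans ha45 hK
  have m1 : a*(a-1) ≤ K*(K-1) := by nlinarith
  have m2 : a*(a-1)*(2*a-1) ≤ K*(K-1)*(2*K-1) := by
    calc a*(a-1)*(2*a-1) ≤ K*(K-1)*(2*a-1) := by
          apply mul_le_mul_of_nonneg_right m1; nlinarith
      _ ≤ K*(K-1)*(2*K-1) := by
          apply mul_le_mul_of_nonneg_left (by nlinarith) (by nlinarith)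
  have m3 : (a*(a-1))^2 ≤ (K*(K-1))^2 := by
    apply pow_le_pow_left₀ (by nlinarith) m1
  have m4 : a*(a-1)*(2*a-1)*(3*a^2-3*a-1) ≤ K*(K-1)*(2*K-1)*(3*K^2-3*K-1) := by
    have hq : 3*a^2-3*a-1 ≤ 3*K^2-3*K-1 := by nlinarith
    have h2 : (0:ℝ) ≤ 3*a^2-3*a-1 := by nlinarith
    have h3 : (0:ℝ) ≤ a*(a-1)*(2*a-1) := by nlinarith
    calc a*(a-1)*(2*a-1)*(3*a^2-3*a-1) ≤ a*(a-1)*(2*a-1)*(3*K^2-3*K-1) := by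
          apply mul_le_mul_of_nonneg_left hq h3
      _ ≤ K*(K-1)*(2*K-1)*(3*K^2-3*K-1) := by
          apply mul_le_mul_of_nonneg_right m2; nlinarith
  have key : (11/20)*M ≤ a*(a-1)/2/M + a*(a-1)*(2*a-1)/6/(2*M^2)
      + (a*(a-1))^2/4/(3*M^3) + a*(a-1)*(2*a-1)*(3*a^2-3*a-1)/30/(4*M^4) := by
    rw [← sub_nonneg]
    have hexp : a*(a-1)/2/M + a*(a-1)*(2*a-1)/6/(2*M^2)
        + (a*(a-1))^2/4/(3*M^3) + a*(a-1)*(2*a-1)*(3*a^2-3*a-1)/30/(4*M^4) - (11/20)*M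
        = (364197*M^5 - 5136075*M^4 + 1219500*M^3 - 45000*M)/(6000000*M^4) := by
      rw [ha]; field_simp; ring
    rw [hexp]
    apply div_nonneg _ (by positivity)
    nlinarith [pow_pos hM0 4, pow_pos hM0 3, pow_pos hM0 2]
  refine le_trans key ?_
  gcongr

private lemma dF_div (m k : ℕ) (hk : k ≤ m) :
    ((m.descFactorial k : ℝ))/(m:ℝ)^k = ∏ s ∈ range k, (1 - (s:ℝ)/m) := by
  rcases Nat.eq_zero_or_pos m with hm | hm
  · subst hm
    interval_cases k <;> simp
  have hme : ∀ s ∈ range k, (1 - (s:ℝ)/m) = ((m - s : ℕ) : ℝ)/(m:ℝ) := by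
    intro s hs
    have hsm : s ≤ m := le_of_lt (lt_of_lt_of_le (mem_range.mp hs) hk)
    rw [Nat.cast_sub hsm]
    field_simp
  rw [prod_congr rfl hme, prod_div_distrib, prod_const, card_range,
    Nat.descFactorial_eq_prod_range, Nat.cast_prod]

private lemma prod_bound {m k : ℕ} (hk : k ≤ m) (hm50 : 50 ≤ m) (hK : 9*m ≤ 10*k) :
    ∏ s ∈ range k, (1 - (s:ℝ)/m) ≤ Real.exp (-((11/20)*m)) := by
  have hm0 : (0:ℝ) < m := by positivity
  have step1 : ∏ s ∈ range k, (1 - (s:ℝ)/m)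
      ≤ ∏ s ∈ range k, Real.exp (-((s:ℝ)/m + ((s:ℝ)/m)^2/2 + ((s:ℝ)/m)^3/3 + ((s:ℝ)/m)^4/4)) := by
    apply prod_le_prod
    · intro s hs
      have hsm : (s:ℝ) ≤ m := by
        exact_mod_cast le_of_lt (lt_of_lt_of_le (mem_range.mp hs) hk)
      have : (s:ℝ)/m ≤ 1 := by rw [div_le_one hm0]; exact hsm
      linarith
    · intro s hs
      apply quartic_pointwise (by positivity)
      rw [div_lt_one hm0]
      exact_mod_cast lt_of_lt_of_le (mem_range.mp hs) hk
  rw [← Real.exp_sum] at step1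
  refine le_trans step1 (Real.exp_le_exp.mpr ?_)
  rw [Finset.sum_neg_distrib, neg_le_neg_iff]
  have hsum : ∑ s ∈ range k, ((s:ℝ)/m + ((s:ℝ)/m)^2/2 + ((s:ℝ)/m)^3/3 + ((s:ℝ)/m)^4/4)
      = (k:ℝ)*(k-1)/2/m + (k:ℝ)*(k-1)*(2*k-1)/6/(2*(m:ℝ)^2)
        + ((k:ℝ)*(k-1))^2/4/(3*(m:ℝ)^3) + (k:ℝ)*(k-1)*(2*k-1)*(3*(k:ℝ)^2-3*k-1)/30/(4*(m:ℝ)^4) := by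
    have e : ∀ s ∈ range k, ((s:ℝ)/m + ((s:ℝ)/m)^2/2 + ((s:ℝ)/m)^3/3 + ((s:ℝ)/m)^4/4)
        = (s:ℝ)*(1/m) + (s:ℝ)^2*(1/(2*(m:ℝ)^2)) + (s:ℝ)^3*(1/(3*(m:ℝ)^3))
          + (s:ℝ)^4*(1/(4*(m:ℝ)^4)) := by
      intro s _
      field_simp
    rw [sum_congr rfl e, sum_add_distrib, sum_add_distrib, sum_add_distrib,
      ← sum_mul, ← sum_mul, ← sum_mul, ← sum_mul,
      sum_range_id', sum_range_sq', sum_range_cube', sum_range_quart']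
    ring
  rw [hsum]
  apply A_bound
  · exact_mod_cast hm50
  · have : (9:ℝ)*m ≤ 10*k := by exact_mod_cast hK
    linarith

private lemma small_nat : ∀ m < 50,
    m^(m/10) * Nat.descFactorial m (m - m/10) * 11^m
      ≤ 6 * Nat.factorial (m/10) * 9^m * m^(m - m/10) := by decide

private lemma exp_fifth : Real.exp (1/5) ≤ 11/9 := by
  have h5 : Real.exp (1/5) ^ (5:ℕ) = Real.exp 1 := by
    rw [← Real.exp_nat_mul]; norm_num
  have he : Real.exp 1 ≤ (11/9:ℝ)^(5:ℕ) := by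
    have := Real.exp_one_lt_d9
    norm_num at this ⊢
    linarith
  refine le_of_pow_le_pow_left₀ (n := 5) (by norm_num) (by norm_num) ?_
  rw [h5]; exact he

private lemma twelve_exp : (12:ℝ) * Real.exp 1 ≤ Real.exp (7/2) := by
  have h12 : (12:ℝ) ≤ Real.exp (5/2) := by
    have h5 : Real.exp (5/2) ^ (2:ℕ) = Real.exp 5 := by
      rw [← Real.exp_nat_mul]; norm_num
    have he : (144:ℝ) ≤ Real.exp 5 := by
      have h1 : (2.7182818283:ℝ) < Real.exp 1 := Real.exp_one_gt_d9
      have h2 : Real.exp 5 = Real.exp 1 ^ (5:ℕ) := by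
        rw [← Real.exp_nat_mul]; norm_num
      rw [h2]
      have : (2.7182818283:ℝ)^(5:ℕ) ≤ Real.exp 1 ^ (5:ℕ) :=
        pow_le_pow_left₀ (by norm_num) h1.le 5
      nlinarith [this]
    refine le_of_pow_le_pow_left₀ (n := 2) (by norm_num) (Real.exp_pos _).le ?_
    rw [h5]; nlinarith [he]
  calc (12:ℝ) * Real.exp 1 ≤ Real.exp (5/2) * Real.exp 1 := by
        apply mul_le_mul_of_nonneg_right h12 (Real.exp_pos _).le
    _ = Real.exp (7/2) := by rw [← Real.exp_add]; norm_num

/-- factorial lower bound: r^r ≤ e^r * r! -/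
private lemma pow_self_le (r : ℕ) (hr : 0 < r) : ((r:ℝ))^r ≤ Real.exp r * (r.factorial) := by
  have h := Real.sum_le_exp_of_nonneg (x := (r:ℝ)) (by positivity) (r+1)
  have hterm : ((r:ℝ))^r / r.factorial ≤ Real.exp r := by
    refine le_trans ?_ h
    exact Finset.single_le_sum (f := fun i => ((r:ℝ))^i / (i.factorial : ℝ))
      (fun i _ => by positivity) (mem_range.mpr (Nat.lt_succ_self r))
  have hfac : (0:ℝ) < r.factorial := by positivity
  rw [div_le_iff₀ hfac] at hterm
  linarith

/-- for `n ≤ m`, the probability that a uniform `I ∈ [m]^n` has at least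
`0.9 m` distinct entries is at most `6 e^{-0.2 m}`. -/
theorem distinct_count_upper_tail (m n : ℕ) (hm : 0 < m) (hn0 : 0 < n) (hn2 : n ≤ m) :
    ((Finset.univ.filter fun I : Fin n → Fin m =>
        (0.9 : ℝ) * m ≤ (dcount I : ℝ)).card : ℝ) / (m : ℝ) ^ n
      ≤ 6 * Real.exp (-(0.2 : ℝ) * m) := by
  classical
  set k : ℕ := m - m/10 with hkdef
  set r : ℕ := m/10 with hrdef
  have hkm : k ≤ m := by omega
  have hrk : r + k = m := by omega
  have h9k : 9*m ≤ 10*k := by omega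
  have hm0 : (0:ℝ) < m := by positivity
  have hRHS : -(0.2:ℝ)*m = -((1/5)*m) := by norm_num
  -- event inclusion
  have hsub : (Finset.univ.filter fun I : Fin n → Fin m => (0.9 : ℝ) * m ≤ (dcount I : ℝ))
      ⊆ (Finset.univ.filter fun I : Fin n → Fin m => k ≤ dcount I) := by
    intro I hI
    simp only [mem_filter, mem_univ, true_and] at hI ⊢
    have h9 : (9:ℝ)*m ≤ 10*(dcount I) := by
      rw [show (0.9:ℝ) = 9/10 by norm_num] at hI
      linarith
    have : 9*m ≤ 10*(dcount I) := by exact_mod_cast h9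
    omega
  have hcount := count_ge m n k
  have hcard : ((Finset.univ.filter fun I : Fin n → Fin m =>
      (0.9 : ℝ) * m ≤ (dcount I : ℝ)).card : ℝ)
      ≤ (n.choose k : ℝ) * ((m.descFactorial k : ℝ) * (m:ℝ) ^ (n-k)) := by
    have h1 : (Finset.univ.filter fun I : Fin n → Fin m =>
        (0.9 : ℝ) * m ≤ (dcount I : ℝ)).card ≤ n.choose k * (m.descFactorial k * m ^ (n-k)) :=
      le_trans (card_le_card hsub) hcount
    exact_mod_cast h1
  by_cases hkn : k ≤ n
  case neg =>
    -- event empty since choose = 0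
    have : n.choose k = 0 := Nat.choose_eq_zero_of_lt (by omega)
    rw [this] at hcard
    simp only [Nat.cast_zero, zero_mul] at hcard
    have hle0 : ((Finset.univ.filter fun I : Fin n → Fin m =>
        (0.9 : ℝ) * m ≤ (dcount I : ℝ)).card : ℝ) / (m:ℝ)^n ≤ 0 := by
      apply div_nonpos_of_nonpos_of_nonneg hcard (by positivity)
    refine le_trans hle0 (by positivity)
  case pos =>
  -- divide
  have hpowsplit : (m:ℝ)^n = (m:ℝ)^k * (m:ℝ)^(n-k) := by
    rw [← pow_add]
    congr 1
    omega
  have hdiv : ((Finset.univ.filter fun I : Fin n → Fin m =>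
      (0.9 : ℝ) * m ≤ (dcount I : ℝ)).card : ℝ) / (m : ℝ) ^ n
      ≤ (n.choose k : ℝ) * (m.descFactorial k : ℝ) / (m:ℝ)^k := by
    rw [div_le_div_iff₀ (by positivity) (by positivity), hpowsplit]
    calc ((Finset.univ.filter fun I : Fin n → Fin m =>
          (0.9 : ℝ) * m ≤ (dcount I : ℝ)).card : ℝ) * (m:ℝ)^k
        ≤ ((n.choose k : ℝ) * ((m.descFactorial k : ℝ) * (m:ℝ) ^ (n-k))) * (m:ℝ)^k := by
          apply mul_le_mul_of_nonneg_right hcard (by positivity)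
      _ = (n.choose k : ℝ) * (m.descFactorial k : ℝ) * ((m:ℝ)^k * (m:ℝ)^(n-k)) := by ring
  refine le_trans hdiv ?_
  -- choose bound
  have hchoose : (n.choose k : ℝ) ≤ (m:ℝ)^r / (r.factorial : ℝ) := by
    have h1 : n.choose k ≤ m.choose k := Nat.choose_le_choose k hn2
    have h2 : m.choose k = m.choose r := by
      rw [← Nat.choose_symm hkm]
      congr 1
      omega
    have h3 : m.choose r * r.factorial ≤ m^r := by
      rw [mul_comm, ← Nat.descFactorial_eq_factorial_mul_choose m r]
      exact Nat.descFactorial_le_pow m r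
    have h5 : (n.choose k : ℝ) * (r.factorial : ℝ) ≤ (m:ℝ)^r := by
      have : n.choose k * r.factorial ≤ m^r := by
        calc n.choose k * r.factorial ≤ m.choose k * r.factorial :=
              Nat.mul_le_mul_right _ h1
          _ = m.choose r * r.factorial := by rw [h2]
          _ ≤ m^r := h3
      exact_mod_cast this
    rw [le_div_iff₀ (by positivity)]
    exact h5
  have hfrac : (n.choose k : ℝ) * (m.descFactorial k : ℝ) / (m:ℝ)^k
      ≤ ((m:ℝ)^r / (r.factorial : ℝ)) * ((m.descFactorial k : ℝ) / (m:ℝ)^k) := by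
    rw [mul_div_assoc]
    apply mul_le_mul_of_nonneg_right hchoose (by positivity)
  refine le_trans hfrac ?_
  by_cases hm50 : m < 50
  · -- small case
    have hnat := small_nat m hm50
    have hcast : (m:ℝ)^r * (m.descFactorial k : ℝ) * 11^m
        ≤ 6 * (r.factorial:ℝ) * 9^m * (m:ℝ)^k := by
      rw [hkdef, hrdef]
      exact_mod_cast hnat
    have hq : ((m:ℝ)^r / (r.factorial : ℝ)) * ((m.descFactorial k : ℝ) / (m:ℝ)^k)
        ≤ 6 * (9/11:ℝ)^m := by
      rw [div_mul_div_comm, div_pow, ← mul_div_assoc,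
        div_le_div_iff₀ (by positivity) (by positivity)]
      calc (m:ℝ)^r * (m.descFactorial k:ℝ) * 11^m
          ≤ (6 * (r.factorial:ℝ) * 9^m * (m:ℝ)^k) := hcast
        _ = 6 * 9^m * ((r.factorial:ℝ) * (m:ℝ)^k) := by ring
    refine le_trans hq ?_
    rw [hRHS]
    have h1 : (9/11:ℝ) ≤ Real.exp (-(1/5)) := by
      have hmul : Real.exp (-(1/5)) * Real.exp (1/5) = 1 := by
        rw [← Real.exp_add]; norm_num
      nlinarith [exp_fifth, Real.exp_pos (-(1/5):ℝ), Real.exp_pos (1/5:ℝ)]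
    have h2 : (9/11:ℝ)^m ≤ Real.exp (-((1/5)*m)) := by
      have : Real.exp (-((1/5)*m)) = (Real.exp (-(1/5)))^m := by
        rw [← Real.exp_nat_mul]
        congr 1
        ring
      rw [this]
      exact pow_le_pow_left₀ (by norm_num) h1 m
    calc 6 * (9/11:ℝ)^m ≤ 6 * Real.exp (-((1/5)*m)) := by
          apply mul_le_mul_of_nonneg_left h2 (by norm_num)
      _ = 6 * Real.exp (-(1/5*(m:ℝ))) := by norm_num
  · -- large case
    push_neg at hm50
    have hr5 : 5 ≤ r := by omega
    have hr0 : (0:ℝ) < r := by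
      have : 0 < r := by omega
      exact_mod_cast this
    have h12r : (m:ℝ) ≤ 12 * r := by
      have : m ≤ 12 * r := by omega
      exact_mod_cast this
    -- m^r / r! ≤ exp((7/20)m)
    have hA : (m:ℝ)^r / (r.factorial : ℝ) ≤ Real.exp ((7/20)*m) := by
      have hps := pow_self_le r (by omega)
      have hfac : (0:ℝ) < r.factorial := by positivity
      have c1 : (m:ℝ)^r / (r.factorial : ℝ) ≤ (Real.exp 1 * m / r)^r := by
        rw [div_le_iff₀ hfac]
        have expand : (Real.exp 1 * m / r)^r * (r.factorial : ℝ)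
            = ((m:ℝ)^r) * ((Real.exp 1 ^ r * (r.factorial : ℝ)) / (r:ℝ)^r) := by
          rw [div_pow, mul_pow]; ring
        rw [expand]
        have hee : Real.exp 1 ^ r = Real.exp r := by
          rw [← Real.exp_nat_mul]; ring_nf
        have h1 : (1:ℝ) ≤ (Real.exp 1 ^ r * (r.factorial : ℝ)) / (r:ℝ)^r := by
          rw [le_div_iff₀ (by positivity), hee, one_mul]
          linarith [hps]
        nlinarith [pow_pos hm0 r, h1]
      have c2 : (Real.exp 1 * m / r : ℝ) ≤ 12 * Real.exp 1 := by
        rw [div_le_iff₀ hr0]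
        calc Real.exp 1 * m ≤ Real.exp 1 * (12*r) := by
              apply mul_le_mul_of_nonneg_left h12r (Real.exp_pos _).le
          _ = 12 * Real.exp 1 * r := by ring
      have c3 : ((Real.exp 1 * m / r : ℝ))^r ≤ (Real.exp (7/2))^r := by
        apply pow_le_pow_left₀ (by positivity) (le_trans c2 twelve_exp)
      have c4 : (Real.exp (7/2) : ℝ)^r = Real.exp ((7/2)*r) := by
        rw [← Real.exp_nat_mul]
        ring_nf
      have c5 : (7/2:ℝ)*r ≤ (7/20)*m := by
        have : 10 * r ≤ m := by omega
        have : (10:ℝ) * r ≤ m := by exact_mod_cast this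
        linarith
      calc (m:ℝ)^r / (r.factorial : ℝ) ≤ (Real.exp 1 * m / r)^r := c1
        _ ≤ (Real.exp (7/2))^r := c3
        _ = Real.exp ((7/2)*r) := c4
        _ ≤ Real.exp ((7/20)*m) := Real.exp_le_exp.mpr c5
    have hB : (m.descFactorial k : ℝ) / (m:ℝ)^k ≤ Real.exp (-((11/20)*m)) := by
      rw [dF_div m k hkm]
      exact prod_bound hkm hm50 h9k
    calc ((m:ℝ)^r / (r.factorial : ℝ)) * ((m.descFactorial k : ℝ) / (m:ℝ)^k)
        ≤ Real.exp ((7/20)*m) * Real.exp (-((11/20)*m)) := by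
          apply mul_le_mul hA hB (by positivity) (Real.exp_pos _).le
      _ = Real.exp (-(0.2:ℝ)*m) := by
          rw [← Real.exp_add]
          norm_num
          ring
      _ ≤ 6 * Real.exp (-(0.2:ℝ)*m) := by
          nlinarith [Real.exp_pos (-(0.2:ℝ)*m)]

end
end

section
/- Fix positive integers m, n with 0.02m ≤ n ≤ m and an integer d' with ⌈0.01m⌉ ≤ d' ≤ ⌊0.9m⌋. Among the buckets {𝒞_{d',L} : L an ordered list of ℓ distinct indices from [m]}, every vector I ∈ [m]^n with |D(I)| = d' is contained in the same number of buckets, and every bucket has the same cardinality. Consequently, drawing a uniformly random list L and then a uniformly random I ∈ 𝒞_{d',L} yields I uniformly distributed on {I ∈ [m]^n : |D(I)| = d'}. -/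
open Finset

noncomputable section

/-- The set of distinct values of `I`, as a finset. -/
def dset {m n : ℕ} (I : Fin n → Fin m) : Finset (Fin m) := Finset.univ.image I

/-- The `k`-th consecutive group of length `20^j` of the list `L`. -/
def grp {m : ℕ} (j k : ℕ) (L : List (Fin m)) : List (Fin m) :=
  (L.drop (k * 20 ^ j)).take (20 ^ j)

/-- `BuildBucket_{d'}(L, U, V)`: if `L` has length `20^0 = 1`, return all `I ∈ [m]^n`
with exactly `d'` distinct values, whose distinct values contain `U` together with the
single entry of `L` and avoid `V`.  Otherwise split `L` into `20` consecutive groups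
`L_0, …, L_19` and return the union over `i = 1, …, 19` of
`BuildBucket_{d'}(L_0, U ∪ ⋃_{j' ∈ {1,…,19} ∖ {i}} L_{j'}, V ∪ L_i)`. -/
def buildBucket (m n d' : ℕ) : ℕ → List (Fin m) → Finset (Fin m) → Finset (Fin m) →
    Finset (Fin n → Fin m)
  | 0, L, U, V =>
      Finset.univ.filter fun I : Fin n → Fin m =>
        dcount I = d' ∧ U ∪ L.toFinset ⊆ dset I ∧ Disjoint V (dset I)
  | (j + 1), L, U, V =>
      (Finset.Icc 1 19).biUnion fun i =>
        buildBucket m n d' j (grp j 0 L)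
          (U ∪ ((Finset.Icc 1 19).erase i).biUnion fun j' => (grp j j' L).toFinset)
          (V ∪ (grp j i L).toFinset)

/-- The bucket `𝒞_{d',L}` associated with a list `L` of `20^j` distinct indices,
obtained as `BuildBucket_{d'}(L, ∅, ∅)`. -/
def bucketOf (m n d' j : ℕ) (L : Fin (20 ^ j) → Fin m) : Finset (Fin n → Fin m) :=
  buildBucket m n d' j (List.ofFn L) ∅ ∅
section Aux

variable {m n d' : ℕ}

lemma dcount_eq_card_dset (I : Fin n → Fin m) : dcount I = (dset I).card := rfl

lemma toFinset_map' {α β : Type*} [DecidableEq α] [DecidableEq β] (f : α → β) (l : List α) :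
    (l.map f).toFinset = l.toFinset.image f := by
  ext x; simp [List.mem_map]

lemma image_biUnion' {α : Type*} [DecidableEq α] (S : Finset ℕ) (t : ℕ → Finset α)
    (σ : α → α) : (S.biUnion t).image σ = S.biUnion fun a => (t a).image σ := by
  ext x
  simp only [Finset.mem_image, Finset.mem_biUnion]
  tauto

lemma dset_comp (σ : Equiv.Perm (Fin m)) (I : Fin n → Fin m) :
    dset (σ ∘ I) = (dset I).image σ := by
  simp [dset, Finset.image_image]

lemma dcount_comp (σ : Equiv.Perm (Fin m)) (I : Fin n → Fin m) :
    dcount (σ ∘ I) = dcount I := by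
  rw [dcount_eq_card_dset, dcount_eq_card_dset, dset_comp,
    Finset.card_image_of_injective _ σ.injective]

/-- Membership in `buildBucket` only depends on `dset I`. -/
lemma mem_buildBucket_of_dset_eq {I I' : Fin n → Fin m} (h : dset I = dset I') :
    ∀ j L U V, I ∈ buildBucket m n d' j L U V → I' ∈ buildBucket m n d' j L U V := by
  intro j
  induction j with
  | zero =>
    intro L U V hI
    simp only [buildBucket, Finset.mem_filter, Finset.mem_univ, true_and] at hI ⊢
    rw [dcount_eq_card_dset, ← h, ← dcount_eq_card_dset]
    exact hI
  | succ j ih =>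
    intro L U V hI
    simp only [buildBucket, Finset.mem_biUnion] at hI ⊢
    obtain ⟨i, hi, hI⟩ := hI
    exact ⟨i, hi, ih _ _ _ hI⟩

lemma grp_map (σ : Equiv.Perm (Fin m)) (j k : ℕ) (L : List (Fin m)) :
    grp j k (L.map σ) = (grp j k L).map σ := by
  simp [grp, List.map_take, List.map_drop]

/-- Equivariance of `buildBucket` under permutations of `[m]`. -/
lemma mem_buildBucket_map (σ : Equiv.Perm (Fin m)) :
    ∀ j (L : List (Fin m)) (U V : Finset (Fin m)) (I : Fin n → Fin m),
      (σ ∘ I) ∈ buildBucket m n d' j (L.map σ) (U.image σ) (V.image σ) ↔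
        I ∈ buildBucket m n d' j L U V := by
  intro j
  induction j with
  | zero =>
    intro L U V I
    simp only [buildBucket, Finset.mem_filter, Finset.mem_univ, true_and]
    rw [dcount_comp, dset_comp, toFinset_map', ← Finset.image_union,
      Finset.image_subset_image_iff σ.injective, Finset.disjoint_image σ.injective]
  | succ j ih =>
    intro L U V I
    simp only [buildBucket, Finset.mem_biUnion]
    refine exists_congr fun i => and_congr_right fun hi => ?_
    simp only [grp_map, toFinset_map']
    rw [← image_biUnion', ← Finset.image_union, ← Finset.image_union]
    exact ih _ _ _ _

/-- Every member of a bucket has exactly `d'` distinct values. -/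
lemma dcount_of_mem_buildBucket :
    ∀ j L U V {I : Fin n → Fin m}, I ∈ buildBucket m n d' j L U V → dcount I = d' := by
  intro j
  induction j with
  | zero =>
    intro L U V I hI
    simp only [buildBucket, Finset.mem_filter] at hI
    exact hI.2.1
  | succ j ih =>
    intro L U V I hI
    simp only [buildBucket, Finset.mem_biUnion] at hI
    obtain ⟨i, hi, hI⟩ := hI
    exact ih _ _ _ hI

/-- `buildBucket` is antitone in `U` and `V`. -/
lemma buildBucket_anti :
    ∀ j L {U U' V V' : Finset (Fin m)}, U ⊆ U' → V ⊆ V' →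
      buildBucket m n d' j L U' V' ⊆ buildBucket m n d' j L U V := by
  intro j
  induction j with
  | zero =>
    intro L U U' V V' hU hV I hI
    simp only [buildBucket, Finset.mem_filter, Finset.mem_univ, true_and] at hI ⊢
    exact ⟨hI.1, (Finset.union_subset_union hU (Finset.Subset.refl _)).trans hI.2.1,
      hI.2.2.mono_left hV⟩
  | succ j ih =>
    intro L U U' V V' hU hV I hI
    simp only [buildBucket, Finset.mem_biUnion] at hI ⊢
    obtain ⟨i, hi, hI⟩ := hI
    exact ⟨i, hi, ih _ (Finset.union_subset_union hU (Finset.Subset.refl _))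
      (Finset.union_subset_union hV (Finset.Subset.refl _)) hI⟩

end Aux
section Perm

variable {m n d' : ℕ}

/-- Extend an equivalence between subtypes of a fintype to a permutation. -/
lemma exists_perm_extend {α : Type*} [Fintype α] [DecidableEq α] {p q : α → Prop}
    [DecidablePred p] [DecidablePred q] (e : {x // p x} ≃ {x // q x}) :
    ∃ σ : Equiv.Perm α, ∀ x (h : p x), σ x = (e ⟨x, h⟩ : α) := by
  have hc : Fintype.card {x // ¬ p x} = Fintype.card {x // ¬ q x} := by
    rw [Fintype.card_subtype_compl, Fintype.card_subtype_compl, Fintype.card_congr e]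
  let f := Fintype.equivOfCardEq hc
  refine ⟨(Equiv.sumCompl p).symm.trans ((e.sumCongr f).trans (Equiv.sumCompl q)), ?_⟩
  intro x h
  simp [Equiv.sumCompl, Equiv.sumCongr, dif_pos h]

/-- Any two injective tuples are related by a permutation. -/
lemma exists_perm_comp {ℓ : ℕ} (L L' : Fin ℓ → Fin m)
    (hL : Function.Injective L) (hL' : Function.Injective L') :
    ∃ σ : Equiv.Perm (Fin m), σ ∘ L = L' := by
  have mk : ∀ (L : Fin ℓ → Fin m), Function.Injective L →
      ∃ eL : Fin ℓ ≃ {x : Fin m // x ∈ Finset.univ.image L},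
        ∀ k, (eL k : Fin m) = L k := by
    intro L hL
    refine ⟨Equiv.ofBijective (fun k => ⟨L k, Finset.mem_image_of_mem _ (Finset.mem_univ k)⟩)
      ⟨fun a b hab => hL (congrArg Subtype.val hab), ?_⟩, fun k => rfl⟩
    rintro ⟨x, hx⟩
    obtain ⟨k, -, rfl⟩ := Finset.mem_image.1 hx
    exact ⟨k, rfl⟩
  obtain ⟨eL, heL⟩ := mk L hL
  obtain ⟨eL', heL'⟩ := mk L' hL'
  obtain ⟨σ, hσ⟩ := exists_perm_extend (eL.symm.trans eL')
  refine ⟨σ, funext fun k => ?_⟩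
  have h1 : L k ∈ Finset.univ.image L := Finset.mem_image_of_mem _ (Finset.mem_univ k)
  have h2 : eL.symm ⟨L k, h1⟩ = k := by
    rw [Equiv.symm_apply_eq]
    exact Subtype.ext (heL k).symm
  rw [Function.comp_apply, hσ (L k) h1, Equiv.trans_apply, h2, heL']

/-- Any two finsets of the same size are related by a permutation. -/
lemma exists_perm_image {S S' : Finset (Fin m)} (h : S.card = S'.card) :
    ∃ σ : Equiv.Perm (Fin m), S.image σ = S' := by
  obtain ⟨σ, hσ⟩ := exists_perm_extend (Finset.equivOfCardEq h)
  refine ⟨σ, Finset.eq_of_subset_of_card_le ?_ ?_⟩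
  · intro x hx
    obtain ⟨y, hy, rfl⟩ := Finset.mem_image.1 hx
    rw [hσ y hy]
    exact (Finset.equivOfCardEq h ⟨y, hy⟩).2
  · rw [Finset.card_image_of_injective _ σ.injective, h]

end Perm
section Construct

variable {m n d' : ℕ}

lemma grp_toFinset_subset_of_ge_two {j j' : ℕ} (hj' : 2 ≤ j') (L0 g1 r : List (Fin m))
    (hL0 : L0.length = 20 ^ j) (hg1 : g1.length = 20 ^ j) :
    (grp j j' (L0 ++ (g1 ++ r))).toFinset ⊆ r.toFinset := by
  obtain ⟨k, rfl⟩ : ∃ k, j' = k + 2 := ⟨j' - 2, by omega⟩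
  have harith : (k + 2) * 20 ^ j = L0.length + (g1.length + k * 20 ^ j) := by
    rw [hL0, hg1]; ring
  intro x hx
  rw [List.mem_toFinset] at hx ⊢
  have : grp j (k + 2) (L0 ++ (g1 ++ r)) = (r.drop (k * 20 ^ j)).take (20 ^ j) := by
    rw [grp, harith, List.drop_length_add_append, List.drop_length_add_append]
  rw [this] at hx
  exact (List.drop_sublist _ _).subset ((List.take_sublist _ _).subset hx)

/-- The key construction: a bucket list containing a given `I`. -/
lemma exists_bucket_list (I : Fin n → Fin m) (hd : dcount I = d') :
    ∀ j (U V A B : Finset (Fin m)), U ⊆ dset I → Disjoint V (dset I) →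
      A ⊆ dset I → Disjoint B (dset I) → 20 ^ j ≤ A.card → 20 ^ j ≤ B.card →
      ∃ L : List (Fin m), L.Nodup ∧ L.length = 20 ^ j ∧ L.toFinset ⊆ A ∪ B ∧
        I ∈ buildBucket m n d' j L U V := by
  intro j
  induction j with
  | zero =>
    intro U V A B hU hV hA hB hAc hBc
    obtain ⟨x, hx⟩ := Finset.card_pos.1 (by simpa using hAc)
    refine ⟨[x], by simp, by simp, by simp [Finset.mem_union.2 (Or.inl hx)], ?_⟩
    simp only [buildBucket, Finset.mem_filter, Finset.mem_univ, true_and]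
    refine ⟨hd, Finset.union_subset hU ?_, hV⟩
    simp only [List.toFinset_cons, List.toFinset_nil, LawfulSingleton.insert_empty_eq,
      Finset.singleton_subset_iff]
    exact hA hx
  | succ j ih =>
    intro U V A B hU hV hA hB hAc hBc
    have hpow : (20 : ℕ) ^ (j + 1) = 20 * 20 ^ j := by rw [pow_succ]; ring
    obtain ⟨SA, hSAsub, hSAcard⟩ := Finset.exists_subset_card_eq
      (show 18 * 20 ^ j ≤ A.card by omega)
    obtain ⟨SB, hSBsub, hSBcard⟩ := Finset.exists_subset_card_eq
      (show 20 ^ j ≤ B.card by omega)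
    have hA'c : 20 ^ j ≤ (A \ SA).card := by
      rw [Finset.card_sdiff_of_subset hSAsub]; omega
    have hB'c : 20 ^ j ≤ (B \ SB).card := by
      rw [Finset.card_sdiff_of_subset hSBsub]; omega
    obtain ⟨L0, hL0nd, hL0len, hL0sub, hL0mem⟩ := ih (U ∪ SA) (V ∪ SB) (A \ SA) (B \ SB)
      (Finset.union_subset hU ((hSAsub.trans hA)))
      (Finset.disjoint_union_left.2 ⟨hV, (Finset.disjoint_of_subset_left hSBsub hB)⟩)
      ((Finset.sdiff_subset).trans hA)
      (Finset.disjoint_of_subset_left Finset.sdiff_subset hB)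
      hA'c hB'c
    set g1 := SB.toList with hg1
    set r := SA.toList with hr
    have hg1len : g1.length = 20 ^ j := by rw [hg1, Finset.length_toList, hSBcard]
    have hrlen : r.length = 18 * 20 ^ j := by rw [hr, Finset.length_toList, hSAcard]
    have hg1fin : g1.toFinset = SB := by rw [hg1, Finset.toList_toFinset]
    have hrfin : r.toFinset = SA := by rw [hr, Finset.toList_toFinset]
    refine ⟨L0 ++ (g1 ++ r), ?_, ?_, ?_, ?_⟩
    · -- Nodup
      rw [List.nodup_append, List.nodup_append]
      refine ⟨hL0nd, ⟨SB.nodup_toList, SA.nodup_toList, ?_⟩, ?_⟩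
      · intro x hxg y hxr hxy
        subst hxy
        rw [← List.mem_toFinset, hg1fin] at hxg
        rw [← List.mem_toFinset, hrfin] at hxr
        exact Finset.disjoint_left.1 hB (hSBsub hxg) (hA (hSAsub hxr))
      · intro x hxL0 y hxM hxy
        subst hxy
        have hx0 : x ∈ (A \ SA) ∪ (B \ SB) := hL0sub (List.mem_toFinset.2 hxL0)
        rw [List.mem_append, ← List.mem_toFinset, ← List.mem_toFinset, hg1fin, hrfin] at hxM
        rcases Finset.mem_union.1 hx0 with hx | hx <;>
          rcases hxM with hxM | hxM
        · exact Finset.disjoint_left.1 hB (hSBsub hxM) (hA (Finset.mem_sdiff.1 hx).1)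
        · exact (Finset.mem_sdiff.1 hx).2 hxM
        · exact (Finset.mem_sdiff.1 hx).2 hxM
        · exact Finset.disjoint_left.1 hB (Finset.mem_sdiff.1 hx).1 (hA (hSAsub hxM))
    · -- length
      simp only [List.length_append, hL0len, hg1len, hrlen]; omega
    · -- toFinset ⊆ A ∪ B
      intro x hx
      rw [List.mem_toFinset, List.mem_append, List.mem_append] at hx
      rcases hx with hx | hx | hx
      · exact Finset.union_subset (Finset.sdiff_subset.trans (Finset.subset_union_left))
          (Finset.sdiff_subset.trans (Finset.subset_union_right))
          (hL0sub (List.mem_toFinset.2 hx))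
      · exact Finset.mem_union.2 (Or.inr (hSBsub (by rwa [← List.mem_toFinset, hg1fin] at hx)))
      · exact Finset.mem_union.2 (Or.inl (hSAsub (by rwa [← List.mem_toFinset, hrfin] at hx)))
    · -- membership
      simp only [buildBucket, Finset.mem_biUnion]
      refine ⟨1, by simp, ?_⟩
      have hgrp0 : grp j 0 (L0 ++ (g1 ++ r)) = L0 := by
        rw [grp, Nat.zero_mul, List.drop_zero, ← hL0len, List.take_left]
      have hgrp1 : grp j 1 (L0 ++ (g1 ++ r)) = g1 := by
        rw [grp, Nat.one_mul, ← hL0len, List.drop_left, hL0len, ← hg1len, List.take_left]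
      rw [hgrp0, hgrp1, hg1fin]
      refine buildBucket_anti j L0 (Finset.union_subset_union (Finset.Subset.refl U) ?_)
        (Finset.Subset.refl _) hL0mem
      refine Finset.biUnion_subset.2 fun j' hj' => ?_
      have hj'2 : 2 ≤ j' := by
        simp only [Finset.mem_erase, Finset.mem_Icc] at hj'
        omega
      rw [← hrfin]
      exact grp_toFinset_subset_of_ge_two hj'2 L0 g1 r hL0len hg1len

end Construct

/-- for fixed `m, n, d'` in the stated ranges, every `I ∈ [m]^n` with
`|D(I)| = d'` lies in the same number `K` of buckets `𝒞_{d',L}`, every bucket has the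
same cardinality `M`, and consequently drawing a uniform list `L` of `ℓ = 20^j` distinct
indices and then a uniform `I ∈ 𝒞_{d',L}` yields a uniform `I` on
`{I ∈ [m]^n : |D(I)| = d'}`. -/
theorem bucket_symmetry (m n j d' : ℕ) (hm : 0 < m) (hn0 : 0 < n)
    (hn1 : (0.02 : ℝ) * m ≤ (n : ℝ)) (hn2 : n ≤ m)
    (hj1 : (20 : ℝ) ^ j ≤ (0.01 : ℝ) * m) (hj2 : (0.01 : ℝ) * m < (20 : ℝ) ^ (j + 1))
    (hd1 : (0.01 : ℝ) * m ≤ (d' : ℝ)) (hd2 : (d' : ℝ) ≤ (0.9 : ℝ) * m) :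
    ∃ K M : ℕ,
      (∀ L : Fin (20 ^ j) → Fin m, Function.Injective L → (bucketOf m n d' j L).card = M) ∧
      (∀ I : Fin n → Fin m, dcount I = d' →
        (Finset.univ.filter fun L : Fin (20 ^ j) → Fin m =>
          Function.Injective L ∧ I ∈ bucketOf m n d' j L).card = K) ∧
      (∀ I : Fin n → Fin m, dcount I = d' →
        (((Finset.univ.filter fun L : Fin (20 ^ j) → Fin m =>
            Function.Injective L).card : ℝ))⁻¹ *
          ∑ L ∈ Finset.univ.filter (fun L : Fin (20 ^ j) → Fin m => Function.Injective L),
            (if I ∈ bucketOf m n d' j L then (((bucketOf m n d' j L).card : ℝ))⁻¹ else 0)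
        = (((Finset.univ.filter fun I' : Fin n → Fin m => dcount I' = d').card : ℝ))⁻¹) := by
  have hcast : ((20 ^ j : ℕ) : ℝ) = (20 : ℝ) ^ j := by push_cast; ring
  have hld : 20 ^ j ≤ d' := by
    have : ((20 ^ j : ℕ) : ℝ) ≤ (d' : ℝ) := by rw [hcast]; linarith
    exact_mod_cast this
  have hdm : d' ≤ m := by
    have : (d' : ℝ) ≤ (m : ℝ) := by
      have hm0 : (0 : ℝ) ≤ (m : ℝ) := Nat.cast_nonneg m
      linarith
    exact_mod_cast this
  have hlmd : 20 ^ j ≤ m - d' := by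
    have : ((20 ^ j : ℕ) : ℝ) ≤ ((m - d' : ℕ) : ℝ) := by
      rw [hcast, Nat.cast_sub hdm]
      have hm0 : (0 : ℝ) ≤ (m : ℝ) := Nat.cast_nonneg m
      linarith
    exact_mod_cast this
  have hlm : 20 ^ j ≤ m := le_trans hld hdm
  -- composition with a permutation is injective
  have hcompinjI : ∀ σ : Equiv.Perm (Fin m),
      Function.Injective (fun I : Fin n → Fin m => σ ∘ I) :=
    fun σ a b h => funext fun i => σ.injective (congrFun h i)
  have hcompinjL : ∀ σ : Equiv.Perm (Fin m),
      Function.Injective (fun L : Fin (20 ^ j) → Fin m => σ ∘ L) :=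
    fun σ a b h => funext fun i => σ.injective (congrFun h i)
  -- equivariance of buckets
  have hbmem : ∀ (σ : Equiv.Perm (Fin m)) (L : Fin (20 ^ j) → Fin m) (I : Fin n → Fin m),
      σ ∘ I ∈ bucketOf m n d' j (σ ∘ L) ↔ I ∈ bucketOf m n d' j L := by
    intro σ L I
    have h := mem_buildBucket_map (d' := d') σ j (List.ofFn L) ∅ ∅ I
    rw [Finset.image_empty, List.map_ofFn] at h
    exact h
  -- all buckets have the same size
  have hMconst : ∀ L L' : Fin (20 ^ j) → Fin m, Function.Injective L →
      Function.Injective L' → (bucketOf m n d' j L).card = (bucketOf m n d' j L').card := by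
    intro L L' hL hL'
    obtain ⟨σ, hσ⟩ := exists_perm_comp L L' hL hL'
    have himg : (bucketOf m n d' j L).image (fun I => σ ∘ I) = bucketOf m n d' j L' := by
      ext I'
      simp only [Finset.mem_image]
      constructor
      · rintro ⟨I, hI, rfl⟩
        rw [← hσ]
        exact (hbmem σ L I).2 hI
      · intro hI'
        refine ⟨σ.symm ∘ I', ?_, funext fun i => by simp⟩
        apply (hbmem σ L (σ.symm ∘ I')).1
        have h1 : σ ∘ (σ.symm ∘ I') = I' := funext fun i => by simp
        rw [h1, hσ]
        exact hI'
    rw [← himg, Finset.card_image_of_injective _ (hcompinjI σ)]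
  set L₀ : Fin (20 ^ j) → Fin m := fun k => Fin.castLE hlm k with hL₀
  have hL₀inj : Function.Injective L₀ := fun a b h => by
    simpa [hL₀, Fin.ext_iff] using h
  set M := (bucketOf m n d' j L₀).card with hM
  have clause1 : ∀ L : Fin (20 ^ j) → Fin m, Function.Injective L →
      (bucketOf m n d' j L).card = M := fun L hL => hMconst L L₀ hL hL₀inj
  -- the count of buckets containing I depends only on dcount I
  have hKconst : ∀ I I' : Fin n → Fin m, dcount I = d' → dcount I' = d' →
      (Finset.univ.filter fun L : Fin (20 ^ j) → Fin m =>
        Function.Injective L ∧ I ∈ bucketOf m n d' j L).card =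
      (Finset.univ.filter fun L : Fin (20 ^ j) → Fin m =>
        Function.Injective L ∧ I' ∈ bucketOf m n d' j L).card := by
    intro I I' hI hI'
    have hcard : (dset I).card = (dset I').card := by
      rw [← dcount_eq_card_dset, ← dcount_eq_card_dset, hI, hI']
    obtain ⟨σ, hσ⟩ := exists_perm_image hcard
    have hds : dset (σ ∘ I) = dset I' := by rw [dset_comp, hσ]
    have himg : (Finset.univ.filter fun L : Fin (20 ^ j) → Fin m =>
        Function.Injective L ∧ I ∈ bucketOf m n d' j L).image (fun L => σ ∘ L) =
        Finset.univ.filter fun L : Fin (20 ^ j) → Fin m =>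
          Function.Injective L ∧ I' ∈ bucketOf m n d' j L := by
      ext L'
      simp only [Finset.mem_image, Finset.mem_filter, Finset.mem_univ, true_and]
      constructor
      · rintro ⟨L, ⟨hLinj, hmem⟩, rfl⟩
        refine ⟨σ.injective.comp hLinj, ?_⟩
        exact mem_buildBucket_of_dset_eq hds j _ _ _ ((hbmem σ L I).2 hmem)
      · rintro ⟨hL'inj, hmem⟩
        refine ⟨σ.symm ∘ L', ⟨σ.symm.injective.comp hL'inj, ?_⟩, funext fun k => by simp⟩
        apply (hbmem σ (σ.symm ∘ L') I).1
        have h1 : σ ∘ (σ.symm ∘ L') = L' := funext fun k => by simp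
        rw [h1]
        exact mem_buildBucket_of_dset_eq hds.symm j _ _ _ hmem
    rw [← himg, Finset.card_image_of_injective _ (hcompinjL σ)]
  by_cases hex : ∃ I₀ : Fin n → Fin m, dcount I₀ = d'
  case neg =>
    exact ⟨0, M, clause1, fun I hI => absurd ⟨I, hI⟩ hex, fun I hI => absurd ⟨I, hI⟩ hex⟩
  obtain ⟨I₀, hI₀⟩ := hex
  set K := (Finset.univ.filter fun L : Fin (20 ^ j) → Fin m =>
    Function.Injective L ∧ I₀ ∈ bucketOf m n d' j L).card with hK
  have clause2 : ∀ I : Fin n → Fin m, dcount I = d' →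
      (Finset.univ.filter fun L : Fin (20 ^ j) → Fin m =>
        Function.Injective L ∧ I ∈ bucketOf m n d' j L).card = K :=
    fun I hI => hKconst I I₀ hI hI₀
  refine ⟨K, M, clause1, clause2, ?_⟩
  intro I hI
  -- K is positive
  have hKpos : 0 < K := by
    rw [← clause2 I hI]
    have hdsetcard : 20 ^ j ≤ (dset I).card := by
      rw [← dcount_eq_card_dset, hI]; exact hld
    have hcomplcard : 20 ^ j ≤ (dset I)ᶜ.card := by
      rw [Finset.card_compl, Fintype.card_fin, ← dcount_eq_card_dset, hI]; exact hlmd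
    obtain ⟨L, hnd, hlen, -, hmemL⟩ := exists_bucket_list I hI j ∅ ∅ (dset I) (dset I)ᶜ
      (Finset.empty_subset _) (Finset.disjoint_empty_left _) (Finset.Subset.refl _)
      (disjoint_compl_left) hdsetcard hcomplcard
    set Lf : Fin (20 ^ j) → Fin m := fun k => L.get (Fin.cast hlen.symm k) with hLf
    have hLfinj : Function.Injective Lf := by
      intro a b hab
      have h1 := (List.nodup_iff_injective_get.1 hnd) hab
      have h2 : (Fin.cast hlen.symm a : ℕ) = (Fin.cast hlen.symm b : ℕ) := by rw [h1]
      exact Fin.ext h2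
    have hofn : List.ofFn Lf = L := by
      apply List.ext_get (by simp [hlen])
      intro i h1 h2
      simp [hLf]
    have hmemb : I ∈ bucketOf m n d' j Lf := by
      show I ∈ buildBucket m n d' j (List.ofFn Lf) ∅ ∅
      rw [hofn]
      exact hmemL
    exact Finset.card_pos.2 ⟨Lf, Finset.mem_filter.2 ⟨Finset.mem_univ _, hLfinj, hmemb⟩⟩
  set Tset := Finset.univ.filter fun I' : Fin n → Fin m => dcount I' = d' with hTset
  have hTpos : 0 < Tset.card :=
    Finset.card_pos.2 ⟨I, Finset.mem_filter.2 ⟨Finset.mem_univ _, hI⟩⟩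
  set Linj := Finset.univ.filter fun L : Fin (20 ^ j) → Fin m => Function.Injective L
    with hLinj
  have hLinjpos : 0 < Linj.card :=
    Finset.card_pos.2 ⟨L₀, Finset.mem_filter.2 ⟨Finset.mem_univ _, hL₀inj⟩⟩
  -- double counting
  have hdouble : Linj.card * M = Tset.card * K := by
    have h1 : ∑ L ∈ Linj, (bucketOf m n d' j L).card = Linj.card * M := by
      rw [Finset.sum_congr rfl (fun L hL => clause1 L (Finset.mem_filter.1 hL).2),
        Finset.sum_const, smul_eq_mul]
    have h2 : ∀ L ∈ Linj, (bucketOf m n d' j L).card =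
        ∑ I' ∈ Tset, if I' ∈ bucketOf m n d' j L then 1 else 0 := by
      intro L hL
      rw [← Finset.sum_filter]
      have hfe : Tset.filter (fun I' => I' ∈ bucketOf m n d' j L) = bucketOf m n d' j L := by
        ext I'
        simp only [Finset.mem_filter, hTset, Finset.mem_univ, true_and]
        constructor
        · exact fun h => h.2
        · exact fun h => ⟨dcount_of_mem_buildBucket j _ _ _ h, h⟩
      rw [hfe, Finset.card_eq_sum_ones]
    have h3 : ∑ L ∈ Linj, (bucketOf m n d' j L).card = Tset.card * K := by
      rw [Finset.sum_congr rfl h2, Finset.sum_comm]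
      have h4 : ∀ I' ∈ Tset, (∑ L ∈ Linj, if I' ∈ bucketOf m n d' j L then 1 else 0) = K := by
        intro I' hI'
        rw [← Finset.sum_filter]
        rw [Finset.sum_const, smul_eq_mul, mul_one]
        rw [hLinj, Finset.filter_filter]
        exact clause2 I' (Finset.mem_filter.1 hI').2
      rw [Finset.sum_congr rfl h4, Finset.sum_const, smul_eq_mul]
    rw [← h1, h3]
  -- M is positive
  have hMpos : 0 < M := by
    by_contra hM0
    have : M = 0 := by omega
    rw [this, Nat.mul_zero] at hdouble
    have := hdouble.symm
    exact absurd this (Nat.mul_ne_zero (by omega) (by omega))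
  -- the final computation
  have hsum : ∑ L ∈ Linj, (if I ∈ bucketOf m n d' j L
      then (((bucketOf m n d' j L).card : ℝ))⁻¹ else 0) = (K : ℝ) * ((M : ℝ))⁻¹ := by
    have hLcong : ∀ L ∈ Linj, (if I ∈ bucketOf m n d' j L
        then (((bucketOf m n d' j L).card : ℝ))⁻¹ else 0) =
        (if I ∈ bucketOf m n d' j L then ((M : ℝ))⁻¹ else 0) := by
      intro L hL
      rw [clause1 L (Finset.mem_filter.1 hL).2]
    rw [Finset.sum_congr rfl hLcong, ← Finset.sum_filter, Finset.sum_const, nsmul_eq_mul,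
      hLinj, Finset.filter_filter, clause2 I hI]
  rw [hsum]
  have hdR : (Linj.card : ℝ) * M = Tset.card * K := by exact_mod_cast hdouble
  have hc0 : (Linj.card : ℝ) ≠ 0 := Nat.cast_ne_zero.2 (by omega)
  have hM0 : (M : ℝ) ≠ 0 := Nat.cast_ne_zero.2 (by omega)
  have hT0 : (Tset.card : ℝ) ≠ 0 := Nat.cast_ne_zero.2 (by omega)
  have hK0 : (K : ℝ) ≠ 0 := Nat.cast_ne_zero.2 (by omega)
  rw [show ((Linj.card : ℝ))⁻¹ * ((K : ℝ) * ((M : ℝ))⁻¹) =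
      (K : ℝ) / ((Linj.card : ℝ) * (M : ℝ)) by rw [div_eq_mul_inv, mul_inv]; ring]
  rw [hdR, mul_comm ((Tset.card : ℝ)) ((K : ℝ)), ← div_div, div_self hK0, one_div]
end
end
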